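/- arXiv:2202.09653 — 3 statements merged into one kernel-verified Lean document; each statement's English description precedes it below -/
import Mathlib

section
/- There exist an absolute constant c > 0 and an integer t₀ such that for every integer t ≥ t₀ the following holds. Let ℬ denote the set of (t+1)³ points {0/t, 1/t, ..., t/t}³ ⊂ ℝ³. For any function F: ℝ³ → {1,2,3}², there are at least c·t⁴ ordered pairs of points (P, Q) ∈ ℬ × ℬ such that: all coordinates of P and Q lie in [0.01, 0.99]; ‖P − Q‖₂ ≤ 1/√t; and (P, Q) is a 0.01-loss for F. -/
open scoped Classical BigOperators

namespace Obstruction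

/-- The Euclidean (ℓ²) norm on ℝ³. -/
noncomputable def enorm (x : Fin 3 → ℝ) : ℝ :=
  Real.sqrt (∑ i : Fin 3, (x i) ^ 2)

/-- `V u`: the sum of the two largest coordinates of `u`,
i.e. the maximum of `u i₁ + u i₂` over pairs of distinct indices. -/
noncomputable def V (u : Fin 3 → ℝ) : ℝ :=
  (Finset.univ.filter (fun q : Fin 3 × Fin 3 => q.1 ≠ q.2)).sup'
    ⟨(0, 1), by decide⟩ (fun q => u q.1 + u q.2)

/-- The gain `G(F, u, u')`: writing `F u = (i, j)` and `F u' = (i', j')`, it is `0` if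
`i = j'` and `u i + u j'` otherwise. -/
noncomputable def G (F : (Fin 3 → ℝ) → Fin 3 × Fin 3) (u u' : Fin 3 → ℝ) : ℝ :=
  if (F u).1 = (F u').2 then 0 else u (F u).1 + u (F u').2

end Obstruction

namespace Obstruction

/-- The grid point of `{0/t, 1/t, …, t/t}³` indexed by `a : Fin 3 → Fin (t+1)`. -/
noncomputable def gridPt (t : ℕ) (a : Fin 3 → Fin (t + 1)) : Fin 3 → ℝ :=
  fun i => (a i : ℝ) / t

end Obstruction

namespace Obstruction

set_option linter.unusedSectionVars false

-- ### point-level lemmas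

lemma V_ge (u : Fin 3 → ℝ) {i j : Fin 3} (h : i ≠ j) : u i + u j ≤ V u := by
  apply Finset.le_sup' (f := fun q : Fin 3 × Fin 3 => u q.1 + u q.2)
    (b := (i, j))
  simp [h]

lemma fin3_third : ∀ (x y : Fin 3), x ≠ y → ∃ z, z ≠ x ∧ z ≠ y := by decide

lemma fin3_eqd : ∀ (m hw x y : Fin 3), hw ≠ m → x ≠ m → x ≠ hw → y ≠ m → y ≠ hw → x = y := by
  intro m hw x y h1 h2 h3 h4 h5
  omega

section pts
variable (F : (Fin 3 → ℝ) → Fin 3 × Fin 3) {u u' u₂ w : Fin 3 → ℝ}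

lemma nonloss_ne (hpos : ∀ i, (0.01:ℝ) ≤ u i) (hnl : V u - G F u u' < 0.01) :
    (F u).1 ≠ (F u').2 := by
  intro h
  unfold G at hnl
  rw [if_pos h] at hnl
  have h01 := V_ge u (show (0:Fin 3) ≠ 1 by decide)
  have := hpos 0; have := hpos 1
  linarith

lemma nonloss_A {m : Fin 3} (hpos : ∀ i, (0.01:ℝ) ≤ u i)
    (hm : ∀ j, j ≠ m → u m + 0.02 ≤ u j) (hnl : V u - G F u u' < 0.01) :
    (F u).1 ≠ m ∧ (F u').2 ≠ m := by
  have hne := nonloss_ne F hpos hnl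
  unfold G at hnl
  rw [if_neg hne] at hnl
  constructor
  · intro h1
    have hj : (F u').2 ≠ m := fun hh => hne (h1.trans hh.symm)
    obtain ⟨ℓ, hℓ1, hℓ2⟩ := fin3_third m (F u').2 (fun hh => hj hh.symm)
    have hV := V_ge u (show ℓ ≠ (F u').2 from hℓ2)
    have := hm ℓ hℓ1
    rw [h1] at hnl
    linarith
  · intro h2'
    have hi : (F u).1 ≠ m := fun hh => hne (hh.trans h2'.symm)
    obtain ⟨ℓ, hℓ1, hℓ2⟩ := fin3_third m (F u).1 (fun hh => hi hh.symm)
    have hV := V_ge u (show (F u).1 ≠ ℓ from fun hh => hℓ2 hh.symm)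
    have := hm ℓ hℓ1
    rw [h2'] at hnl
    linarith

lemma nonloss_B {M : Fin 3} (hpos : ∀ i, (0.01:ℝ) ≤ u i)
    (hM : ∀ j, j ≠ M → u j + 0.02 ≤ u M) (hnl : V u - G F u u' < 0.01) :
    ((F u).1 = M ↔ (F u').2 ≠ M) := by
  have hne := nonloss_ne F hpos hnl
  unfold G at hnl
  rw [if_neg hne] at hnl
  constructor
  · intro h1 h2
    exact hne (h1.trans h2.symm)
  · intro hj
    by_contra hi
    have hV := V_ge u (show M ≠ (F u').2 from fun h => hj h.symm)
    have := hM _ hi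
    linarith

lemma linkA {m : Fin 3} (hpos : ∀ i, (0.01:ℝ) ≤ u i) (hpos₂ : ∀ i, (0.01:ℝ) ≤ u₂ i)
    (hm : ∀ j, j ≠ m → u m + 0.02 ≤ u j) (hm₂ : ∀ j, j ≠ m → u₂ m + 0.02 ≤ u₂ j)
    (h1 : V u - G F u w < 0.01) (h2 : V u₂ - G F u₂ w < 0.01) :
    (F u).1 = (F u₂).1 ∧ (F u).1 ≠ m := by
  obtain ⟨hg1, hw1⟩ := nonloss_A F hpos hm h1
  obtain ⟨hg2, _⟩ := nonloss_A F hpos₂ hm₂ h2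
  have hne1 := nonloss_ne F hpos h1
  have hne2 := nonloss_ne F hpos₂ h2
  exact ⟨fin3_eqd m (F w).2 _ _ hw1 hg1 hne1 hg2 hne2, hg1⟩

lemma linkB {M : Fin 3} (hpos : ∀ i, (0.01:ℝ) ≤ u i) (hpos₂ : ∀ i, (0.01:ℝ) ≤ u₂ i)
    (hM : ∀ j, j ≠ M → u j + 0.02 ≤ u M) (hM₂ : ∀ j, j ≠ M → u₂ j + 0.02 ≤ u₂ M)
    (h1 : V u - G F u w < 0.01) (h2 : V u₂ - G F u₂ w < 0.01) :
    ((F u).1 = M ↔ (F u₂).1 = M) := by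
  rw [nonloss_B F hpos hM h1, nonloss_B F hpos₂ hM₂ h2]

end pts

-- ### generic counting lemmas

section cnt
variable {α : Type*} [DecidableEq α] (R : α → α → Prop) (K : ℕ)

lemma sum_filter_product (A B : Finset α) :
    ∑ a ∈ A, (B.filter fun b => R a b).card
      = ((A ×ˢ B).filter fun ab => R ab.1 ab.2).card := by
  classical
  rw [Finset.card_eq_sum_card_fiberwise
    (f := Prod.fst) (t := A)
    (fun x hx => (Finset.mem_product.mp (Finset.mem_filter.mp hx).1).1)]
  apply Finset.sum_congr rfl
  intro a ha
  have himg : (((A ×ˢ B).filter fun ab => R ab.1 ab.2).filter fun x => x.1 = a)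
      = (B.filter fun b => R a b).image (Prod.mk a) := by
    ext x
    simp only [Finset.mem_filter, Finset.mem_image, Finset.mem_product]
    constructor
    · rintro ⟨⟨⟨h1, h2⟩, hR⟩, hfst⟩
      refine ⟨x.2, ⟨h2, by rwa [hfst] at hR⟩, Prod.ext hfst.symm rfl⟩
    · rintro ⟨b, hb, rfl⟩
      exact ⟨⟨⟨ha, hb.1⟩, hb.2⟩, rfl⟩
  rw [himg, Finset.card_image_of_injective _ (Prod.mk_right_injective a)]

lemma count_sel (A B Wn : Finset α) (hA : A ⊆ Wn) (hB : B ⊆ Wn)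
    (hnh : 9 * ((Wn ×ˢ Wn).filter fun ab => R ab.1 ab.2).card < K^2) :
    3 * (A.filter fun a => K ≤ 3 * (B.filter fun b => R a b).card).card < K := by
  classical
  have hK : 0 < K := by
    rcases Nat.eq_zero_or_pos K with h | h
    · subst h; simp at hnh
    · exact h
  have hsum : ∑ a ∈ A, (B.filter fun b => R a b).card
      ≤ ((Wn ×ˢ Wn).filter fun ab => R ab.1 ab.2).card := by
    rw [sum_filter_product]
    exact Finset.card_le_card
      (Finset.filter_subset_filter _ (Finset.product_subset_product hA hB))
  set bad := A.filter fun a => K ≤ 3 * (B.filter fun b => R a b).card with hbad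
  have h1 : bad.card * K ≤ 3 * ∑ a ∈ A, (B.filter fun b => R a b).card := by
    calc bad.card * K = ∑ _a ∈ bad, K := by rw [Finset.sum_const, smul_eq_mul, mul_comm]
    _ ≤ ∑ a ∈ bad, 3 * (B.filter fun b => R a b).card :=
        Finset.sum_le_sum (fun a ha => (Finset.mem_filter.mp ha).2)
    _ ≤ 3 * ∑ a ∈ A, (B.filter fun b => R a b).card := by
        rw [← Finset.mul_sum]
        exact Nat.mul_le_mul_left 3 (Finset.sum_le_sum_of_subset (Finset.filter_subset _ _))
  have h2 : (3 * bad.card) * K < K * K := by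
    have := Nat.mul_le_mul_left 3 h1
    calc (3 * bad.card) * K = 3 * (bad.card * K) := by ring
    _ ≤ 3 * (3 * ∑ a ∈ A, (B.filter fun b => R a b).card) := Nat.mul_le_mul_left 3 h1
    _ ≤ 9 * ((Wn ×ˢ Wn).filter fun ab => R ab.1 ab.2).card := by
        rw [← mul_assoc]; exact Nat.mul_le_mul_left 9 hsum
    _ < K^2 := hnh
    _ = K * K := sq K
  exact Nat.lt_of_mul_lt_mul_right h2

lemma count_wit (P Q : α) (B : Finset α) (hKB : K ≤ B.card)
    (hP : 3 * (B.filter fun b => R P b).card < K)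
    (hQ : 3 * (B.filter fun b => R Q b).card < K) :
    ∃ w ∈ B, ¬ R P w ∧ ¬ R Q w := by
  classical
  by_contra hcon
  push_neg at hcon
  have hsub : B ⊆ (B.filter fun b => R P b) ∪ (B.filter fun b => R Q b) := by
    intro b hb
    rcases Classical.em (R P b) with h | h
    · exact Finset.mem_union_left _ (Finset.mem_filter.mpr ⟨hb, h⟩)
    · exact Finset.mem_union_right _ (Finset.mem_filter.mpr ⟨hb, hcon b hb h⟩)
  have := (Finset.card_le_card hsub).trans (Finset.card_union_le _ _)
  omega

end cnt


-- constants
def nn (t : ℕ) : ℕ := Nat.sqrt t / 4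
def qq (t : ℕ) : ℕ := t / (5 * nn t)
def DD (t : ℕ) : ℕ := qq t * nn t
def cc (t : ℕ) : ℕ := 3 * t / 10
def vv (t : ℕ) : ℕ := t / 34
def mm (t : ℕ) : ℕ := 6 * qq t
def KK (t : ℕ) : ℕ := nn t ^ 3

section facts
variable {t : ℕ} (ht : 10^6 ≤ t)

include ht

lemma sqrt_ge : 1000 ≤ Nat.sqrt t := Nat.le_sqrt.mpr (by omega)

lemma sqrt_sq_le : Nat.sqrt t * Nat.sqrt t ≤ t := by
  have := Nat.sqrt_le' t
  nlinarith

lemma sqrt_le : 1000 * Nat.sqrt t ≤ t := by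
  have h1 := sqrt_ge ht
  have h2 := sqrt_sq_le ht
  nlinarith

lemma nn_ge : 250 ≤ nn t := by
  have := sqrt_ge ht; unfold nn; omega

lemma nn_le4 : 4 * nn t ≤ Nat.sqrt t := by unfold nn; omega

lemma nn_sq : 16 * (nn t * nn t) ≤ t := by
  have h1 := nn_le4 ht
  have h2 := sqrt_sq_le ht
  nlinarith

lemma DD5 : 5 * DD t ≤ t := by
  have h := Nat.div_mul_le_self t (5 * nn t)
  have h2 : 5 * DD t = t / (5 * nn t) * (5 * nn t) := by unfold DD qq; ring
  omega

lemma DD5' : t < 5 * DD t + 5 * nn t := by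
  have hpos : 0 < 5 * nn t := by have := nn_ge ht; omega
  have hdm := Nat.div_add_mod t (5 * nn t)
  have hml := Nat.mod_lt t hpos
  have h2 : 5 * DD t = 5 * nn t * (t / (5 * nn t)) := by unfold DD qq; ring
  omega

lemma nn_ub4 : Nat.sqrt t < 4 * nn t + 4 := by unfold nn; omega

lemma qq_ge2 : 2 ≤ qq t := by
  have h5 := DD5' ht
  have hD : DD t = qq t * nn t := rfl
  have hn := nn_le4 ht
  have hs := sqrt_le ht
  -- if qq t ≤ 1 then 5*DD ≤ 5*nn so t < 10*nn ≤ 10*sqrt/4 small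
  have h2 := nn_ge ht
  by_contra hc
  push_neg at hc
  interval_cases h : qq t <;> omega

lemma qq_le : qq t ≤ Nat.sqrt t + 2 := by
  set s := Nat.sqrt t with hs
  have h1 : qq t * (5 * nn t) ≤ t := Nat.div_mul_le_self _ _
  have h2 := nn_le4 ht
  have h2' := nn_ub4 ht
  have h3 : t < (s + 1) * (s + 1) := by
    have := Nat.lt_succ_sqrt' t
    nlinarith
  have h4 := sqrt_ge ht
  by_contra hc
  push_neg at hc
  have h5 : s ≤ 5 * nn t := by omega
  have h6 : (s + 3) * s ≤ qq t * s := Nat.mul_le_mul_right s (by omega)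
  have h7 : qq t * s ≤ qq t * (5 * nn t) := Nat.mul_le_mul_left _ h5
  nlinarith

lemma NF_margin : t + 150 * nn t + 50 * vv t + 100 ≤ 50 * DD t := by
  have h1 := DD5' ht
  have h2 := nn_le4 ht
  have h3 := sqrt_le ht
  have h4 : 34 * vv t ≤ t := by unfold vv; omega
  omega

lemma cc_lb : 29 * t ≤ 100 * cc t := by unfold cc; omega

lemma coord_ub : 100 * (cc t + 2 * DD t + vv t + nn t) ≤ 74 * t := by
  have h1 := DD5 ht
  have h2 : 34 * vv t ≤ t := by unfold vv; omega
  have h3 := nn_le4 ht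
  have h4 := sqrt_le ht
  have h5 : 10 * cc t ≤ 3 * t := by unfold cc; omega
  omega

end facts

-- segment table
def zSeg (t s x : ℕ) : Fin 3 → ℕ :=
  let c := cc t; let D := DD t
  match s with
  | 0 => ![c+2*D, c+D-x, c+x]
  | 1 => ![c+2*D-x, c, c+D+x]
  | 2 => ![c+D-x, c+x, c+2*D]
  | 3 => ![c, c+D+x, c+2*D-x]
  | 4 => ![c+x, c+2*D, c+D-x]
  | 5 => ![c+D+x, c+2*D-x, c]
  | _ => ![c+2*D, c+D, c]

def zB (t k : ℕ) : Fin 3 → ℕ := zSeg t (k / qq t) ((k % qq t) * nn t)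

lemma zB_zero : zB t 0 = zSeg t 0 0 := by
  unfold zB
  rw [Nat.zero_div, Nat.zero_mod, Nat.zero_mul]

lemma zB_mm (ht : 10^6 ≤ t) : zB t (mm t) = zSeg t 0 0 := by
  have hq := qq_ge2 ht
  have hmq : mm t = qq t * 6 := by unfold mm; ring
  unfold zB
  rw [hmq, Nat.mul_div_cancel_left _ (by omega : 0 < qq t),
    Nat.mul_mod_right, Nat.zero_mul]
  funext i
  fin_cases i <;> simp [zSeg]

lemma zB_cases (t k : ℕ) (hq : 0 < qq t) (hk : k < mm t) :
    ∃ s r, k = qq t * s + r ∧ r < qq t ∧ s < 6 ∧ zB t k = zSeg t s (r * nn t) ∧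
      ((r + 1 < qq t → zB t (k+1) = zSeg t s ((r+1) * nn t)) ∧
       (r + 1 = qq t → zB t (k+1) = zSeg t (s+1) 0)) := by
  have hdm := Nat.div_add_mod k (qq t)
  refine ⟨k / qq t, k % qq t, by omega, Nat.mod_lt k hq, ?_, rfl, ?_, ?_⟩
  · rw [Nat.div_lt_iff_lt_mul hq]
    unfold mm at hk
    omega
  · intro hr
    unfold zB
    have h1 : k + 1 = qq t * (k / qq t) + (k % qq t + 1) := by omega
    rw [h1, Nat.mul_add_div hq, Nat.mul_add_mod]
    rw [Nat.div_eq_of_lt hr, Nat.mod_eq_of_lt hr, Nat.add_zero]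
  · intro hr
    unfold zB
    have hgg : qq t * (k / qq t + 1) = qq t * (k / qq t) + qq t := by ring
    have h1 : k + 1 = qq t * (k / qq t + 1) := by omega
    rw [h1, Nat.mul_div_cancel_left _ hq, Nat.mul_mod_right, Nat.zero_mul]


def jit (t : ℕ) : Finset (Fin 3 → ℕ) := Fintype.piFinset fun _ : Fin 3 => Finset.range (nn t)
def TT (t : ℕ) : Finset (Fin 3 → ℕ) := Fintype.piFinset fun _ : Fin 3 => Finset.range (vv t)
def cube (t : ℕ) (v : Fin 3 → ℕ) (k : ℕ) : Finset (Fin 3 → ℕ) :=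
  (jit t).image fun w => fun i => zB t k i + v i + w i
def win (t : ℕ) (v : Fin 3 → ℕ) (k : ℕ) : Finset (Fin 3 → ℕ) := cube t v k ∪ cube t v (k+1)
noncomputable def ptR (t : ℕ) (a : Fin 3 → ℕ) : Fin 3 → ℝ := fun i => (a i : ℝ) / t

lemma card_jit (t : ℕ) : (jit t).card = KK t := by
  simp [jit, KK, Finset.prod_const]

lemma cube_card (t : ℕ) (v : Fin 3 → ℕ) (k : ℕ) : (cube t v k).card = KK t := by
  have hinj : Function.Injective (fun (w : Fin 3 → ℕ) => fun i => zB t k i + v i + w i) := by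
    intro w w' h
    funext i
    have h2 := congrFun h i
    simp only at h2
    omega
  rw [cube, Finset.card_image_of_injective _ hinj, card_jit]

lemma mem_cube {t : ℕ} {v a : Fin 3 → ℕ} {k : ℕ} :
    a ∈ cube t v k ↔ ∃ w : Fin 3 → ℕ, (∀ i, w i < nn t) ∧ a = fun i => zB t k i + v i + w i := by
  constructor
  · intro ha
    obtain ⟨w, hw, heq⟩ := Finset.mem_image.mp ha
    refine ⟨w, fun i => ?_, heq.symm⟩
    have := Fintype.mem_piFinset.mp hw i
    simpa using this
  · rintro ⟨w, hw, rfl⟩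
    exact Finset.mem_image.mpr
      ⟨w, Fintype.mem_piFinset.mpr (fun i => Finset.mem_range.mpr (hw i)), rfl⟩

lemma cube_bounds {t : ℕ} {v a : Fin 3 → ℕ} {k : ℕ} (hv : v ∈ TT t) (ha : a ∈ cube t v k) :
    ∀ i, zB t k i + v i ≤ a i ∧ a i < zB t k i + v i + nn t ∧ a i < zB t k i + vv t + nn t := by
  rw [mem_cube] at ha
  obtain ⟨w, hw, rfl⟩ := ha
  simp only [TT, Fintype.mem_piFinset, Finset.mem_range] at hv
  intro i
  have h1 := hw i; have h2 := hv i
  beta_reduce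
  omega

lemma zSeg_range {t : ℕ} {s x : ℕ} (hx : x ≤ DD t) :
    ∀ i, cc t ≤ zSeg t s x i ∧ zSeg t s x i ≤ cc t + 2 * DD t := by
  intro i
  match s with
  | 0 | 1 | 2 | 3 | 4 | 5 => fin_cases i <;> simp [zSeg] <;> omega
  | (n+6) => fin_cases i <;> simp [zSeg] <;> omega

lemma zB_range {t : ℕ} (ht : 10^6 ≤ t) (k : ℕ) :
    ∀ i, cc t ≤ zB t k i ∧ zB t k i ≤ cc t + 2 * DD t := by
  have hq := qq_ge2 ht
  apply zSeg_range
  have h1 : k % qq t < qq t := Nat.mod_lt _ (by omega)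
  calc (k % qq t) * nn t ≤ (qq t - 1) * nn t := Nat.mul_le_mul_right _ (by omega)
  _ ≤ qq t * nn t := Nat.mul_le_mul_right _ (by omega)
  _ = DD t := rfl

lemma tpos {t : ℕ} (ht : 10^6 ≤ t) : (0:ℝ) < t := by
  have : (0:ℕ) < t := by omega
  exact_mod_cast this

lemma pt_icc {t : ℕ} (ht : 10^6 ≤ t) {v a : Fin 3 → ℕ} {k : ℕ}
    (hv : v ∈ TT t) (ha : a ∈ cube t v k) :
    ∀ i, ptR t a i ∈ Set.Icc (0.01:ℝ) 0.99 := by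
  intro i
  have h1 := (zB_range ht k i).1
  have h2 := (zB_range ht k i).2
  have h3 := cube_bounds hv ha i
  have h4 := cc_lb ht
  have h5 := coord_ub ht
  have hvv : v i < vv t := by
    simp only [TT, Fintype.mem_piFinset, Finset.mem_range] at hv; exact hv i
  have hlo : 29 * t ≤ 100 * a i := by omega
  have hhi : 100 * a i ≤ 74 * t := by omega
  have ht0 := tpos ht
  constructor
  · rw [ptR, le_div_iff₀ ht0]
    have : (29:ℝ) * t ≤ 100 * a i := by exact_mod_cast hlo
    nlinarith
  · rw [ptR, div_le_iff₀ ht0]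
    have : (100:ℝ) * a i ≤ 74 * t := by exact_mod_cast hhi
    nlinarith

lemma pt_pos {t : ℕ} (ht : 10^6 ≤ t) {v a : Fin 3 → ℕ} {k : ℕ}
    (hv : v ∈ TT t) (ha : a ∈ cube t v k) :
    ∀ i, (0.01:ℝ) ≤ ptR t a i := fun i => (pt_icc ht hv ha i).1

lemma marg_of_z {t : ℕ} (ht : 10^6 ≤ t) {v a : Fin 3 → ℕ} {k : ℕ} {i j : Fin 3}
    (hv : v ∈ TT t) (ha : a ∈ cube t v k)
    (hz : zB t k i + DD t ≤ zB t k j + 2 * nn t) :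
    ptR t a i + 0.02 ≤ ptR t a j := by
  have hb := cube_bounds hv ha
  have hbi := hb i
  have hbj := hb j
  have hm := NF_margin ht
  have hN : 50 * a i + t ≤ 50 * a j := by omega
  have ht0 := tpos ht
  have hcast : 50 * (a i : ℝ) + t ≤ 50 * (a j : ℝ) := by exact_mod_cast hN
  simp only [ptR]
  rw [← sub_nonneg]
  have heq : (a j : ℝ)/t - ((a i : ℝ)/t + 0.02) = (50*(a j:ℝ) - (50*(a i:ℝ) + t)) / (50*t) := by
    field_simp
    ring
  rw [heq]
  apply div_nonneg (by linarith) (by positivity)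


lemma zB_adj {t : ℕ} (ht : 10^6 ≤ t) {k : ℕ} (hk : k < mm t) :
    ∀ i, zB t (k+1) i ≤ zB t k i + nn t ∧ zB t k i ≤ zB t (k+1) i + nn t := by
  have hq := qq_ge2 ht
  obtain ⟨s, r, hk', hr, hs6, hzk, hmid, hjun⟩ := zB_cases t k (by omega) hk
  have hrn : (r+1) * nn t ≤ DD t := by
    calc (r+1) * nn t ≤ qq t * nn t := Nat.mul_le_mul_right _ (by omega)
    _ = DD t := rfl
  have hrn2 : (r+1) * nn t = r * nn t + nn t := by ring
  by_cases hj : r + 1 < qq t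
  · rw [hzk, hmid hj]
    interval_cases s <;> (intro i; fin_cases i <;> simp [zSeg] <;> omega)
  · have hj' : r + 1 = qq t := by omega
    have hDr : r * nn t + nn t = DD t := by rw [← hrn2, hj']; rfl
    rw [hzk, hjun hj']
    interval_cases s <;> (intro i; fin_cases i <;> simp [zSeg] <;> omega)


lemma win_dist {t : ℕ} (ht : 10^6 ≤ t) {v a b : Fin 3 → ℕ} {k : ℕ} (hk : k < mm t)
    (hv : v ∈ TT t) (ha : a ∈ win t v k) (hb : b ∈ win t v k) :
    enorm (ptR t a - ptR t b) ≤ 1 / Real.sqrt t := by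
  have ht0 := tpos ht
  have hnn := nn_ge ht
  have hnsq := nn_sq ht
  have hadj := zB_adj ht hk
  have hcoord : ∀ i, a i ≤ b i + 2 * nn t ∧ b i ≤ a i + 2 * nn t := by
    intro i
    have h1 := hadj i
    rcases Finset.mem_union.mp ha with ha' | ha' <;>
      rcases Finset.mem_union.mp hb with hb' | hb' <;>
      [skip; skip; skip; skip] <;>
      (first
        | (have ba := cube_bounds hv ha' i; have bb := cube_bounds hv hb' i; omega))
  have hterm : ∀ i : Fin 3, ((ptR t a - ptR t b) i) ^ 2 ≤ (2 * nn t / t : ℝ)^2 := by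
    intro i
    have h := hcoord i
    have h1 : (a i : ℝ) ≤ (b i : ℝ) + 2 * nn t := by exact_mod_cast h.1
    have h2 : (b i : ℝ) ≤ (a i : ℝ) + 2 * nn t := by exact_mod_cast h.2
    have hdiff : (ptR t a - ptR t b) i = ((a i : ℝ) - b i) / t := by
      simp [ptR, Pi.sub_apply, div_sub_div_same]
    rw [hdiff]
    apply sq_le_sq'
    · rw [← neg_div, div_le_div_iff₀ ht0 ht0]
      nlinarith
    · rw [div_le_div_iff₀ ht0 ht0]
      nlinarith
  have hsum : ∑ i : Fin 3, ((ptR t a - ptR t b) i)^2 ≤ 3 * (2*nn t/t:ℝ)^2 := by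
    calc ∑ i : Fin 3, ((ptR t a - ptR t b) i)^2 ≤ ∑ _i : Fin 3, (2*nn t/t:ℝ)^2 :=
      Finset.sum_le_sum (fun i _ => hterm i)
    _ = 3 * (2*nn t/t:ℝ)^2 := by
      rw [Finset.sum_const]
      simp [Finset.card_univ]
  have hle : (3:ℝ) * (2*nn t/t)^2 ≤ 1/t := by
    have hc : (16:ℝ)*((nn t:ℝ)*(nn t:ℝ)) ≤ t := by exact_mod_cast hnsq
    have he : (3:ℝ)*(2*nn t/t)^2 = (12*((nn t:ℝ)*nn t))/(t*t) := by
      field_simp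
      ring
    rw [he, div_le_div_iff₀ (by positivity) ht0]
    nlinarith
  have : enorm (ptR t a - ptR t b) ≤ Real.sqrt (1/t) :=
    Real.sqrt_le_sqrt (by linarith)
  calc enorm (ptR t a - ptR t b) ≤ Real.sqrt (1/t) := this
  _ = 1 / Real.sqrt t := by rw [one_div, Real.sqrt_inv, one_div]


def lossP (F : (Fin 3 → ℝ) → Fin 3 × Fin 3) (t : ℕ) (a b : Fin 3 → ℕ) : Prop :=
  V (ptR t a) - G F (ptR t a) (ptR t b) ≥ 0.01

noncomputable def LS (F : (Fin 3 → ℝ) → Fin 3 × Fin 3) (t : ℕ) (v : Fin 3 → ℕ) (k : ℕ) :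
    Finset ((Fin 3 → ℕ) × (Fin 3 → ℕ)) :=
  ((win t v k) ×ˢ (win t v k)).filter fun ab => lossP F t ab.1 ab.2

def heavy (F : (Fin 3 → ℝ) → Fin 3 × Fin 3) (t : ℕ) (v : Fin 3 → ℕ) (k : ℕ) : Prop :=
  KK t ^ 2 ≤ 9 * (LS F t v k).card

def bad (F : (Fin 3 → ℝ) → Fin 3 × Fin 3) (t : ℕ) (a : Fin 3 → ℕ)
    (B : Finset (Fin 3 → ℕ)) : Prop :=
  KK t ≤ 3 * (B.filter fun b => lossP F t a b).card

noncomputable def gF (F : (Fin 3 → ℝ) → Fin 3 × Fin 3) (t : ℕ) (a : Fin 3 → ℕ) : Fin 3 :=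
  (F (ptR t a)).1

def ψs (β : Prop) (s : ℕ) (x : Fin 3) : Prop :=
  if s = 0 then (x = 0 ↔ β)
  else if s = 1 then (if β then x = 0 else x = 2)
  else if s = 2 then (x = 2 ↔ ¬ β)
  else if s = 3 then (if β then x = 1 else x = 2)
  else if s = 4 then (x = 1 ↔ β)
  else (if β then x = 1 else x = 0)

section loop
variable {t : ℕ} {F : (Fin 3 → ℝ) → Fin 3 × Fin 3} {v : Fin 3 → ℕ} {k₁ k₂ j j₁ j₂ : ℕ}

-- selection of a not-bad point in a cube, avoiding two bad sets
lemma sel_two (ht : 10^6 ≤ t) (hnh₁ : ¬ heavy F t v k₁) (hnh₂ : ¬ heavy F t v k₂)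
    (hA1 : cube t v j ⊆ win t v k₁) (hB1 : cube t v j₁ ⊆ win t v k₁)
    (hA2 : cube t v j ⊆ win t v k₂) (hB2 : cube t v j₂ ⊆ win t v k₂) :
    ∃ a ∈ cube t v j, ¬ bad F t a (cube t v j₁) ∧ ¬ bad F t a (cube t v j₂) := by
  have h1 := count_sel (lossP F t) (KK t) (cube t v j) (cube t v j₁) (win t v k₁)
    hA1 hB1 (by unfold heavy LS at hnh₁; omega)
  have h2 := count_sel (lossP F t) (KK t) (cube t v j) (cube t v j₂) (win t v k₂)
    hA2 hB2 (by unfold heavy LS at hnh₂; omega)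
  have hcard := cube_card t v j
  by_contra hcon
  push_neg at hcon
  have hsub : cube t v j ⊆
      ((cube t v j).filter fun a => KK t ≤ 3 * ((cube t v j₁).filter fun b => lossP F t a b).card)
      ∪ ((cube t v j).filter fun a => KK t ≤ 3 * ((cube t v j₂).filter fun b => lossP F t a b).card) := by
    intro a ha
    rcases Classical.em (bad F t a (cube t v j₁)) with h | h
    · exact Finset.mem_union_left _ (Finset.mem_filter.mpr ⟨ha, h⟩)
    · exact Finset.mem_union_right _ (Finset.mem_filter.mpr ⟨ha, hcon a ha h⟩)
  have := (Finset.card_le_card hsub).trans (Finset.card_union_le _ _)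
  have hK : 0 < KK t := by
    have := nn_ge ht
    have : 0 < nn t := by omega
    unfold KK
    positivity
  omega

end loop

lemma loop_contra {t : ℕ} {F : (Fin 3 → ℝ) → Fin 3 × Fin 3} {v : Fin 3 → ℕ}
    (ht : 10^6 ≤ t) (hv : v ∈ TT t)
    (hnh : ∀ k, k < mm t → ¬ heavy F t v k) : False := by
  have hnn := nn_ge ht
  have hq2 := qq_ge2 ht
  have hq0 : 0 < qq t := by omega
  have hmm_pos : 0 < mm t := by unfold mm; omega
  have hcmm : cube t v (mm t) = cube t v 0 := by
    unfold cube; rw [zB_mm ht, ← zB_zero]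
  obtain ⟨P₀, hP₀c, hP₀b, -⟩ := sel_two (j := 0) (j₁ := 1) (j₂ := 1) ht
    (hnh 0 hmm_pos) (hnh 0 hmm_pos)
    Finset.subset_union_left Finset.subset_union_right
    Finset.subset_union_left Finset.subset_union_right
  set β := ((F (ptR t P₀)).1 = 0) with hβdef
  have main : ∀ k, k ≤ mm t → ∃ a ∈ cube t v k,
      (¬ bad F t a (cube t v (if k = mm t then 1 else k+1))) ∧
      ψs β (k / qq t) ((F (ptR t a)).1) := by
    intro k
    induction k with
    | zero =>
      intro _
      refine ⟨P₀, hP₀c, by rw [if_neg (by omega)]; exact hP₀b, ?_⟩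
      rw [Nat.zero_div]
      simp only [ψs]
      norm_num
      exact Iff.rfl
    | succ k ih =>
      intro hk1
      have hk : k < mm t := by omega
      obtain ⟨P, hPc, hPb, hPψ⟩ := ih (by omega)
      rw [if_neg (by omega)] at hPb
      obtain ⟨s, r, hk', hr, hs6, hzk, hmid, hjun⟩ := zB_cases t k hq0 hk
      have hdivk : k / qq t = s := by
        rw [hk', Nat.mul_add_div hq0, Nat.div_eq_of_lt hr]
        omega
      rw [hdivk] at hPψ
      have hQex : ∃ Q ∈ cube t v (k+1), ¬ bad F t Q (cube t v (k+1)) ∧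
          ¬ bad F t Q (cube t v (if k + 1 = mm t then 1 else k+2)) := by
        by_cases hke : k + 1 = mm t
        · rw [if_pos hke]
          have hceq : cube t v (k+1) = cube t v 0 := by rw [hke, hcmm]
          refine sel_two ht (hnh k hk) (hnh 0 hmm_pos)
            Finset.subset_union_right Finset.subset_union_right ?_
            Finset.subset_union_right
          rw [hceq]; exact Finset.subset_union_left
        · rw [if_neg hke]
          exact sel_two ht (hnh k hk) (hnh (k+1) (by omega))
            Finset.subset_union_right Finset.subset_union_right
            Finset.subset_union_left Finset.subset_union_right
      obtain ⟨Q, hQc, hQb1, hQb2⟩ := hQex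
      have hPb' : 3 * ((cube t v (k+1)).filter fun b => lossP F t P b).card < KK t := by
        unfold bad at hPb; omega
      have hQb1' : 3 * ((cube t v (k+1)).filter fun b => lossP F t Q b).card < KK t := by
        unfold bad at hQb1; omega
      obtain ⟨Wp, hWc, hWP, hWQ⟩ := count_wit (lossP F t) (KK t) P Q (cube t v (k+1))
        (le_of_eq (cube_card t v (k+1)).symm) hPb' hQb1'
      have hlP : V (ptR t P) - G F (ptR t P) (ptR t Wp) < 0.01 := not_le.mp hWP
      have hlQ : V (ptR t Q) - G F (ptR t Q) (ptR t Wp) < 0.01 := not_le.mp hWQ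
      have hposP := pt_pos ht hv hPc
      have hposQ := pt_pos ht hv hQc
      refine ⟨Q, hQc, hQb2, ?_⟩
      have e1 : (r+1) * nn t = r * nn t + nn t := by ring
      have e2 : r * nn t + nn t ≤ DD t := by
        rw [← e1]
        calc (r+1) * nn t ≤ qq t * nn t := Nat.mul_le_mul_right _ (by omega)
        _ = DD t := rfl
      by_cases hj : r + 1 < qq t
      · have hdivk1 : (k+1) / qq t = s := by
          have hh : k + 1 = qq t * s + (r+1) := by omega
          rw [hh, Nat.mul_add_div hq0, Nat.div_eq_of_lt hj]
          omega
        rw [hdivk1]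
        have hzk1 := hmid hj
        have e4 : (r+1) * nn t ≤ DD t := by omega
        interval_cases s
        · have hmP : ∀ j, j ≠ (0:Fin 3) → ptR t P j + 0.02 ≤ ptR t P 0 := by
            intro j hjj
            apply marg_of_z ht hv hPc
            rw [hzk]
            fin_cases j
            · first | (exact absurd rfl hjj) | (simp [zSeg]; omega) | (simp [zSeg])
            · first | (exact absurd rfl hjj) | (simp [zSeg]; omega) | (simp [zSeg])
            · first | (exact absurd rfl hjj) | (simp [zSeg]; omega) | (simp [zSeg])
          have hmQ : ∀ j, j ≠ (0:Fin 3) → ptR t Q j + 0.02 ≤ ptR t Q 0 := by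
            intro j hjj
            apply marg_of_z ht hv hQc
            rw [hzk1]
            fin_cases j
            · first | (exact absurd rfl hjj) | (simp [zSeg]; omega) | (simp [zSeg])
            · first | (exact absurd rfl hjj) | (simp [zSeg]; omega) | (simp [zSeg])
            · first | (exact absurd rfl hjj) | (simp [zSeg]; omega) | (simp [zSeg])
          have hiff := linkB F hposP hposQ hmP hmQ hlP hlQ
          simp only [ψs] at hPψ ⊢
          norm_num at hPψ ⊢
          exact hiff.symm.trans hPψ
        · have hmP : ∀ j, j ≠ (1:Fin 3) → ptR t P 1 + 0.02 ≤ ptR t P j := by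
            intro j hjj
            apply marg_of_z ht hv hPc
            rw [hzk]
            fin_cases j
            · first | (exact absurd rfl hjj) | (simp [zSeg]; omega) | (simp [zSeg])
            · first | (exact absurd rfl hjj) | (simp [zSeg]; omega) | (simp [zSeg])
            · first | (exact absurd rfl hjj) | (simp [zSeg]; omega) | (simp [zSeg])
          have hmQ : ∀ j, j ≠ (1:Fin 3) → ptR t Q 1 + 0.02 ≤ ptR t Q j := by
            intro j hjj
            apply marg_of_z ht hv hQc
            rw [hzk1]
            fin_cases j
            · first | (exact absurd rfl hjj) | (simp [zSeg]; omega) | (simp [zSeg])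
            · first | (exact absurd rfl hjj) | (simp [zSeg]; omega) | (simp [zSeg])
            · first | (exact absurd rfl hjj) | (simp [zSeg]; omega) | (simp [zSeg])
          have heq := (linkA F hposP hposQ hmP hmQ hlP hlQ).1
          rw [← heq]
          exact hPψ
        · have hmP : ∀ j, j ≠ (2:Fin 3) → ptR t P j + 0.02 ≤ ptR t P 2 := by
            intro j hjj
            apply marg_of_z ht hv hPc
            rw [hzk]
            fin_cases j
            · first | (exact absurd rfl hjj) | (simp [zSeg]; omega) | (simp [zSeg])
            · first | (exact absurd rfl hjj) | (simp [zSeg]; omega) | (simp [zSeg])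
            · first | (exact absurd rfl hjj) | (simp [zSeg]; omega) | (simp [zSeg])
          have hmQ : ∀ j, j ≠ (2:Fin 3) → ptR t Q j + 0.02 ≤ ptR t Q 2 := by
            intro j hjj
            apply marg_of_z ht hv hQc
            rw [hzk1]
            fin_cases j
            · first | (exact absurd rfl hjj) | (simp [zSeg]; omega) | (simp [zSeg])
            · first | (exact absurd rfl hjj) | (simp [zSeg]; omega) | (simp [zSeg])
            · first | (exact absurd rfl hjj) | (simp [zSeg]; omega) | (simp [zSeg])
          have hiff := linkB F hposP hposQ hmP hmQ hlP hlQ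
          simp only [ψs] at hPψ ⊢
          norm_num at hPψ ⊢
          exact hiff.symm.trans hPψ
        · have hmP : ∀ j, j ≠ (0:Fin 3) → ptR t P 0 + 0.02 ≤ ptR t P j := by
            intro j hjj
            apply marg_of_z ht hv hPc
            rw [hzk]
            fin_cases j
            · first | (exact absurd rfl hjj) | (simp [zSeg]; omega) | (simp [zSeg])
            · first | (exact absurd rfl hjj) | (simp [zSeg]; omega) | (simp [zSeg])
            · first | (exact absurd rfl hjj) | (simp [zSeg]; omega) | (simp [zSeg])
          have hmQ : ∀ j, j ≠ (0:Fin 3) → ptR t Q 0 + 0.02 ≤ ptR t Q j := by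
            intro j hjj
            apply marg_of_z ht hv hQc
            rw [hzk1]
            fin_cases j
            · first | (exact absurd rfl hjj) | (simp [zSeg]; omega) | (simp [zSeg])
            · first | (exact absurd rfl hjj) | (simp [zSeg]; omega) | (simp [zSeg])
            · first | (exact absurd rfl hjj) | (simp [zSeg]; omega) | (simp [zSeg])
          have heq := (linkA F hposP hposQ hmP hmQ hlP hlQ).1
          rw [← heq]
          exact hPψ
        · have hmP : ∀ j, j ≠ (1:Fin 3) → ptR t P j + 0.02 ≤ ptR t P 1 := by
            intro j hjj
            apply marg_of_z ht hv hPc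
            rw [hzk]
            fin_cases j
            · first | (exact absurd rfl hjj) | (simp [zSeg]; omega) | (simp [zSeg])
            · first | (exact absurd rfl hjj) | (simp [zSeg]; omega) | (simp [zSeg])
            · first | (exact absurd rfl hjj) | (simp [zSeg]; omega) | (simp [zSeg])
          have hmQ : ∀ j, j ≠ (1:Fin 3) → ptR t Q j + 0.02 ≤ ptR t Q 1 := by
            intro j hjj
            apply marg_of_z ht hv hQc
            rw [hzk1]
            fin_cases j
            · first | (exact absurd rfl hjj) | (simp [zSeg]; omega) | (simp [zSeg])
            · first | (exact absurd rfl hjj) | (simp [zSeg]; omega) | (simp [zSeg])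
            · first | (exact absurd rfl hjj) | (simp [zSeg]; omega) | (simp [zSeg])
          have hiff := linkB F hposP hposQ hmP hmQ hlP hlQ
          simp only [ψs] at hPψ ⊢
          norm_num at hPψ ⊢
          exact hiff.symm.trans hPψ
        · have hmP : ∀ j, j ≠ (2:Fin 3) → ptR t P 2 + 0.02 ≤ ptR t P j := by
            intro j hjj
            apply marg_of_z ht hv hPc
            rw [hzk]
            fin_cases j
            · first | (exact absurd rfl hjj) | (simp [zSeg]; omega) | (simp [zSeg])
            · first | (exact absurd rfl hjj) | (simp [zSeg]; omega) | (simp [zSeg])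
            · first | (exact absurd rfl hjj) | (simp [zSeg]; omega) | (simp [zSeg])
          have hmQ : ∀ j, j ≠ (2:Fin 3) → ptR t Q 2 + 0.02 ≤ ptR t Q j := by
            intro j hjj
            apply marg_of_z ht hv hQc
            rw [hzk1]
            fin_cases j
            · first | (exact absurd rfl hjj) | (simp [zSeg]; omega) | (simp [zSeg])
            · first | (exact absurd rfl hjj) | (simp [zSeg]; omega) | (simp [zSeg])
            · first | (exact absurd rfl hjj) | (simp [zSeg]; omega) | (simp [zSeg])
          have heq := (linkA F hposP hposQ hmP hmQ hlP hlQ).1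
          rw [← heq]
          exact hPψ
      · have hj' : r + 1 = qq t := by omega
        have hdivk1 : (k+1) / qq t = s + 1 := by
          have hgg : qq t * (s+1) = qq t * s + qq t := by ring
          have hh : k + 1 = qq t * (s+1) := by omega
          rw [hh, Nat.mul_div_cancel_left _ hq0]
        rw [hdivk1]
        have hzk1 := hjun hj'
        have e3 : r * nn t + nn t = DD t := by rw [← e1, hj']; rfl
        interval_cases s
        · have hmP : ∀ j, j ≠ (1:Fin 3) → ptR t P 1 + 0.02 ≤ ptR t P j := by
            intro j hjj
            apply marg_of_z ht hv hPc
            rw [hzk]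
            fin_cases j
            · first | (exact absurd rfl hjj) | (simp [zSeg]; omega) | (simp [zSeg])
            · first | (exact absurd rfl hjj) | (simp [zSeg]; omega) | (simp [zSeg])
            · first | (exact absurd rfl hjj) | (simp [zSeg]; omega) | (simp [zSeg])
          have hmQ : ∀ j, j ≠ (1:Fin 3) → ptR t Q 1 + 0.02 ≤ ptR t Q j := by
            intro j hjj
            apply marg_of_z ht hv hQc
            rw [hzk1]
            fin_cases j
            · first | (exact absurd rfl hjj) | (simp [zSeg]; omega) | (simp [zSeg])
            · first | (exact absurd rfl hjj) | (simp [zSeg]; omega) | (simp [zSeg])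
            · first | (exact absurd rfl hjj) | (simp [zSeg]; omega) | (simp [zSeg])
          obtain ⟨heq, hne⟩ := linkA F hposP hposQ hmP hmQ hlP hlQ
          simp only [ψs] at hPψ ⊢
          norm_num at hPψ ⊢
          by_cases hβ : β
          · rw [if_pos hβ]; rw [← heq]; exact hPψ.mpr hβ
          · rw [if_neg hβ]
            have h0 : (F (ptR t P)).1 ≠ 0 := fun h => hβ (hPψ.mp h)
            rw [← heq]; omega
        · have hmP : ∀ j, j ≠ (1:Fin 3) → ptR t P 1 + 0.02 ≤ ptR t P j := by
            intro j hjj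
            apply marg_of_z ht hv hPc
            rw [hzk]
            fin_cases j
            · first | (exact absurd rfl hjj) | (simp [zSeg]; omega) | (simp [zSeg])
            · first | (exact absurd rfl hjj) | (simp [zSeg]; omega) | (simp [zSeg])
            · first | (exact absurd rfl hjj) | (simp [zSeg]; omega) | (simp [zSeg])
          have hmQ : ∀ j, j ≠ (1:Fin 3) → ptR t Q 1 + 0.02 ≤ ptR t Q j := by
            intro j hjj
            apply marg_of_z ht hv hQc
            rw [hzk1]
            fin_cases j
            · first | (exact absurd rfl hjj) | (simp [zSeg]; omega) | (simp [zSeg])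
            · first | (exact absurd rfl hjj) | (simp [zSeg]; omega) | (simp [zSeg])
            · first | (exact absurd rfl hjj) | (simp [zSeg]; omega) | (simp [zSeg])
          obtain ⟨heq, hne⟩ := linkA F hposP hposQ hmP hmQ hlP hlQ
          simp only [ψs] at hPψ ⊢
          norm_num at hPψ ⊢
          by_cases hβ : β
          · rw [if_pos hβ] at hPψ
            constructor
            · intro h2; rw [← heq] at h2; exact fun _ => by omega
            · intro hnb; exact absurd hβ hnb
          · rw [if_neg hβ] at hPψ
            exact ⟨fun _ => hβ, fun _ => by rw [← heq]; exact hPψ⟩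
        · have hmP : ∀ j, j ≠ (0:Fin 3) → ptR t P 0 + 0.02 ≤ ptR t P j := by
            intro j hjj
            apply marg_of_z ht hv hPc
            rw [hzk]
            fin_cases j
            · first | (exact absurd rfl hjj) | (simp [zSeg]; omega) | (simp [zSeg])
            · first | (exact absurd rfl hjj) | (simp [zSeg]; omega) | (simp [zSeg])
            · first | (exact absurd rfl hjj) | (simp [zSeg]; omega) | (simp [zSeg])
          have hmQ : ∀ j, j ≠ (0:Fin 3) → ptR t Q 0 + 0.02 ≤ ptR t Q j := by
            intro j hjj
            apply marg_of_z ht hv hQc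
            rw [hzk1]
            fin_cases j
            · first | (exact absurd rfl hjj) | (simp [zSeg]; omega) | (simp [zSeg])
            · first | (exact absurd rfl hjj) | (simp [zSeg]; omega) | (simp [zSeg])
            · first | (exact absurd rfl hjj) | (simp [zSeg]; omega) | (simp [zSeg])
          obtain ⟨heq, hne⟩ := linkA F hposP hposQ hmP hmQ hlP hlQ
          simp only [ψs] at hPψ ⊢
          norm_num at hPψ ⊢
          by_cases hβ : β
          · rw [if_pos hβ]
            have h2 : (F (ptR t P)).1 ≠ 2 := fun h => (hPψ.mp h) hβ
            rw [← heq]; omega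
          · rw [if_neg hβ]; rw [← heq]; exact hPψ.mpr hβ
        · have hmP : ∀ j, j ≠ (0:Fin 3) → ptR t P 0 + 0.02 ≤ ptR t P j := by
            intro j hjj
            apply marg_of_z ht hv hPc
            rw [hzk]
            fin_cases j
            · first | (exact absurd rfl hjj) | (simp [zSeg]; omega) | (simp [zSeg])
            · first | (exact absurd rfl hjj) | (simp [zSeg]; omega) | (simp [zSeg])
            · first | (exact absurd rfl hjj) | (simp [zSeg]; omega) | (simp [zSeg])
          have hmQ : ∀ j, j ≠ (0:Fin 3) → ptR t Q 0 + 0.02 ≤ ptR t Q j := by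
            intro j hjj
            apply marg_of_z ht hv hQc
            rw [hzk1]
            fin_cases j
            · first | (exact absurd rfl hjj) | (simp [zSeg]; omega) | (simp [zSeg])
            · first | (exact absurd rfl hjj) | (simp [zSeg]; omega) | (simp [zSeg])
            · first | (exact absurd rfl hjj) | (simp [zSeg]; omega) | (simp [zSeg])
          obtain ⟨heq, hne⟩ := linkA F hposP hposQ hmP hmQ hlP hlQ
          simp only [ψs] at hPψ ⊢
          norm_num at hPψ ⊢
          by_cases hβ : β
          · rw [if_pos hβ] at hPψ
            exact ⟨fun _ => hβ, fun _ => by rw [← heq]; exact hPψ⟩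
          · rw [if_neg hβ] at hPψ
            constructor
            · intro h1; rw [← heq] at h1; omega
            · intro hb; exact absurd hb hβ
        · have hmP : ∀ j, j ≠ (2:Fin 3) → ptR t P 2 + 0.02 ≤ ptR t P j := by
            intro j hjj
            apply marg_of_z ht hv hPc
            rw [hzk]
            fin_cases j
            · first | (exact absurd rfl hjj) | (simp [zSeg]; omega) | (simp [zSeg])
            · first | (exact absurd rfl hjj) | (simp [zSeg]; omega) | (simp [zSeg])
            · first | (exact absurd rfl hjj) | (simp [zSeg]; omega) | (simp [zSeg])
          have hmQ : ∀ j, j ≠ (2:Fin 3) → ptR t Q 2 + 0.02 ≤ ptR t Q j := by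
            intro j hjj
            apply marg_of_z ht hv hQc
            rw [hzk1]
            fin_cases j
            · first | (exact absurd rfl hjj) | (simp [zSeg]; omega) | (simp [zSeg])
            · first | (exact absurd rfl hjj) | (simp [zSeg]; omega) | (simp [zSeg])
            · first | (exact absurd rfl hjj) | (simp [zSeg]; omega) | (simp [zSeg])
          obtain ⟨heq, hne⟩ := linkA F hposP hposQ hmP hmQ hlP hlQ
          simp only [ψs] at hPψ ⊢
          norm_num at hPψ ⊢
          by_cases hβ : β
          · rw [if_pos hβ]; rw [← heq]; exact hPψ.mpr hβ
          · rw [if_neg hβ]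
            have h1 : (F (ptR t P)).1 ≠ 1 := fun h => hβ (hPψ.mp h)
            rw [← heq]; omega
        · have hmP : ∀ j, j ≠ (2:Fin 3) → ptR t P 2 + 0.02 ≤ ptR t P j := by
            intro j hjj
            apply marg_of_z ht hv hPc
            rw [hzk]
            fin_cases j
            · first | (exact absurd rfl hjj) | (simp [zSeg]; omega) | (simp [zSeg])
            · first | (exact absurd rfl hjj) | (simp [zSeg]; omega) | (simp [zSeg])
            · first | (exact absurd rfl hjj) | (simp [zSeg]; omega) | (simp [zSeg])
          have hmQ : ∀ j, j ≠ (2:Fin 3) → ptR t Q 2 + 0.02 ≤ ptR t Q j := by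
            intro j hjj
            apply marg_of_z ht hv hQc
            rw [hzk1]
            fin_cases j
            · first | (exact absurd rfl hjj) | (simp [zSeg]; omega) | (simp [zSeg])
            · first | (exact absurd rfl hjj) | (simp [zSeg]; omega) | (simp [zSeg])
            · first | (exact absurd rfl hjj) | (simp [zSeg]; omega) | (simp [zSeg])
          obtain ⟨heq, hne⟩ := linkA F hposP hposQ hmP hmQ hlP hlQ
          simp only [ψs] at hPψ ⊢
          norm_num at hPψ ⊢
          rw [← heq]; exact hPψ
  -- final contradiction
  obtain ⟨Qf, hQfc, hQfb, hQfψ⟩ := main (mm t) le_rfl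
  rw [if_pos rfl] at hQfb
  have hdmm : mm t / qq t = 6 := by
    have hh : mm t = qq t * 6 := by unfold mm; ring
    rw [hh, Nat.mul_div_cancel_left _ hq0]
  rw [hdmm] at hQfψ
  simp only [ψs] at hQfψ
  norm_num at hQfψ
  have hQfc0 : Qf ∈ cube t v 0 := hcmm ▸ hQfc
  have hP₀b' : 3 * ((cube t v 1).filter fun b => lossP F t P₀ b).card < KK t := by
    unfold bad at hP₀b; omega
  have hQfb' : 3 * ((cube t v 1).filter fun b => lossP F t Qf b).card < KK t := by
    unfold bad at hQfb; omega
  obtain ⟨Wp, hWc, hWP, hWQ⟩ := count_wit (lossP F t) (KK t) P₀ Qf (cube t v 1)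
    (le_of_eq (cube_card t v 1).symm) hP₀b' hQfb'
  have hlP : V (ptR t P₀) - G F (ptR t P₀) (ptR t Wp) < 0.01 := not_le.mp hWP
  have hlQ : V (ptR t Qf) - G F (ptR t Qf) (ptR t Wp) < 0.01 := not_le.mp hWQ
  have hposP := pt_pos ht hv hP₀c
  have hposQ := pt_pos ht hv hQfc0
  have hmP : ∀ j, j ≠ (0:Fin 3) → ptR t P₀ j + 0.02 ≤ ptR t P₀ 0 := by
    intro j hjj
    apply marg_of_z ht hv hP₀c
    rw [zB_zero]
    fin_cases j
    · exact absurd rfl hjj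
    · simp [zSeg]; omega
    · simp [zSeg]; omega
  have hmQ : ∀ j, j ≠ (0:Fin 3) → ptR t Qf j + 0.02 ≤ ptR t Qf 0 := by
    intro j hjj
    apply marg_of_z ht hv hQfc0
    rw [zB_zero]
    fin_cases j
    · exact absurd rfl hjj
    · simp [zSeg]; omega
    · simp [zSeg]; omega
  have hiff := linkB F hposP hposQ hmP hmQ hlP hlQ
  by_cases hβ : β
  · have h1 := hiff.mp hβ
    rw [if_pos hβ] at hQfψ
    omega
  · rw [if_neg hβ] at hQfψ
    exact hβ (hiff.mpr hQfψ)


lemma card_TT (t : ℕ) : (TT t).card = vv t ^ 3 := by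
  simp [TT, Finset.prod_const]

lemma win_le_t {t : ℕ} (ht : 10^6 ≤ t) {v a : Fin 3 → ℕ} {k : ℕ}
    (hv : v ∈ TT t) (ha : a ∈ win t v k) : ∀ i, a i ≤ t := by
  intro i
  have hc := coord_ub ht
  unfold win at ha
  rcases Finset.mem_union.mp ha with h | h
  · have h1 := cube_bounds hv h i
    have h2 := (zB_range ht k i).2
    omega
  · have h1 := cube_bounds hv h i
    have h2 := (zB_range ht (k+1) i).2
    omega

def toFin (t : ℕ) (a : Fin 3 → ℕ) : Fin 3 → Fin (t+1) :=
  fun i => ⟨a i % (t+1), Nat.mod_lt _ (by omega)⟩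

lemma gridPt_toFin {t : ℕ} {a : Fin 3 → ℕ} (hb : ∀ i, a i ≤ t) :
    gridPt t (toFin t a) = ptR t a := by
  funext i
  have : a i % (t+1) = a i := Nat.mod_eq_of_lt (by have := hb i; omega)
  simp [gridPt, toFin, ptR, this]

theorem main_count {t : ℕ} (ht : 10^6 ≤ t) (F : (Fin 3 → ℝ) → Fin 3 × Fin 3) :
    (1/10^10 : ℝ) * (t : ℝ) ^ 4 ≤
      (((Finset.univ : Finset ((Fin 3 → Fin (t + 1)) × (Fin 3 → Fin (t + 1)))).filter
            (fun ab =>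
              (∀ i, gridPt t ab.1 i ∈ Set.Icc (0.01 : ℝ) 0.99) ∧
              (∀ i, gridPt t ab.2 i ∈ Set.Icc (0.01 : ℝ) 0.99) ∧
              enorm (gridPt t ab.1 - gridPt t ab.2) ≤ 1 / Real.sqrt t ∧
              V (gridPt t ab.1) - G F (gridPt t ab.1) (gridPt t ab.2) ≥ 0.01)).card : ℝ) := by
  classical
  -- choice of heavy windows
  have hsel : ∀ v : Fin 3 → ℕ, ∃ k, (v ∈ TT t → k < mm t ∧ heavy F t v k) := by
    intro v
    by_cases hv : v ∈ TT t
    · have hno : ¬ ∀ k, k < mm t → ¬ heavy F t v k := fun h => loop_contra ht hv h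
      push_neg at hno
      obtain ⟨k, hk1, hk2⟩ := hno
      exact ⟨k, fun _ => ⟨hk1, hk2⟩⟩
    · exact ⟨0, fun h => absurd h hv⟩
  choose kf hkf using hsel
  set A : (Fin 3 → ℕ) → Finset ((Fin 3 → ℕ) × (Fin 3 → ℕ)) := fun v => LS F t v (kf v) with hA
  set Sn : Finset ((Fin 3 → ℕ) × (Fin 3 → ℕ)) := (TT t).biUnion A with hSn
  -- basic facts about members of Sn
  have hmemA : ∀ v ∈ TT t, ∀ x ∈ A v,
      (x.1 ∈ win t v (kf v) ∧ x.2 ∈ win t v (kf v)) ∧ lossP F t x.1 x.2 := by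
    intro v hv x hx
    have := Finset.mem_filter.mp hx
    exact ⟨Finset.mem_product.mp this.1, this.2⟩
  -- multiplicity bound
  have hmult : ∀ x : (Fin 3 → ℕ) × (Fin 3 → ℕ),
      ((TT t).filter fun v => x ∈ A v).card ≤ (mm t + 1) * KK t := by
    intro x
    have hsub : ((TT t).filter fun v => x ∈ A v) ⊆
        ((Finset.range (mm t + 1)) ×ˢ jit t).image
          (fun p => fun i => x.1 i - (zB t p.1 i + p.2 i)) := by
      intro v hvf
      obtain ⟨hv, hx⟩ := Finset.mem_filter.mp hvf
      obtain ⟨⟨h1, -⟩, -⟩ := hmemA v hv x hx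
      have hkm : kf v < mm t := (hkf v hv).1
      rcases Finset.mem_union.mp h1 with h | h
      · obtain ⟨w, hw, hxe⟩ := mem_cube.mp h
        refine Finset.mem_image.mpr ⟨(kf v, w), Finset.mem_product.mpr
          ⟨Finset.mem_range.mpr (by omega),
           Fintype.mem_piFinset.mpr fun i => Finset.mem_range.mpr (hw i)⟩, ?_⟩
        funext i
        show x.1 i - (zB t (kf v) i + w i) = v i
        have hxi := congrFun hxe i
        beta_reduce at hxi
        omega
      · obtain ⟨w, hw, hxe⟩ := mem_cube.mp h
        refine Finset.mem_image.mpr ⟨(kf v + 1, w), Finset.mem_product.mpr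
          ⟨Finset.mem_range.mpr (by omega),
           Fintype.mem_piFinset.mpr fun i => Finset.mem_range.mpr (hw i)⟩, ?_⟩
        funext i
        show x.1 i - (zB t (kf v + 1) i + w i) = v i
        have hxi := congrFun hxe i
        beta_reduce at hxi
        omega
    calc ((TT t).filter fun v => x ∈ A v).card
        ≤ _ := Finset.card_le_card hsub
      _ ≤ ((Finset.range (mm t + 1)) ×ˢ jit t).card := Finset.card_image_le
      _ = (mm t + 1) * KK t := by rw [Finset.card_product, Finset.card_range, card_jit]
  -- sum over translations
  have hkey : (TT t).card * KK t ^ 2 ≤ 9 * ((mm t + 1) * KK t) * Sn.card := by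
    have h1 : ∀ v ∈ TT t, KK t ^ 2 ≤ 9 * (A v).card := fun v hv => (hkf v hv).2
    have h2 : (TT t).card * KK t ^ 2 ≤ ∑ v ∈ TT t, 9 * (A v).card := by
      calc (TT t).card * KK t ^ 2 = ∑ _v ∈ TT t, KK t ^ 2 := by
            rw [Finset.sum_const, smul_eq_mul]
        _ ≤ ∑ v ∈ TT t, 9 * (A v).card := Finset.sum_le_sum h1
    have h3 : ∀ v ∈ TT t, (A v).card = ∑ x ∈ Sn, if x ∈ A v then 1 else 0 := by
      intro v hv
      have hsub : A v ⊆ Sn := Finset.subset_biUnion_of_mem A hv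
      rw [← Finset.card_filter]
      congr 1
      rw [Finset.filter_mem_eq_inter, Finset.inter_eq_right.mpr hsub]
    have h4 : ∑ v ∈ TT t, (A v).card = ∑ x ∈ Sn, ((TT t).filter fun v => x ∈ A v).card := by
      rw [Finset.sum_congr rfl h3, Finset.sum_comm]
      refine Finset.sum_congr rfl fun x hx => ?_
      rw [Finset.card_filter]
    have h5 : ∑ x ∈ Sn, ((TT t).filter fun v => x ∈ A v).card ≤ Sn.card * ((mm t + 1) * KK t) := by
      calc ∑ x ∈ Sn, ((TT t).filter fun v => x ∈ A v).card
          ≤ ∑ _x ∈ Sn, (mm t + 1) * KK t := Finset.sum_le_sum (fun x _ => hmult x)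
        _ = Sn.card * ((mm t + 1) * KK t) := by rw [Finset.sum_const, smul_eq_mul]
    calc (TT t).card * KK t ^ 2 ≤ ∑ v ∈ TT t, 9 * (A v).card := h2
      _ = 9 * ∑ v ∈ TT t, (A v).card := by rw [Finset.mul_sum]
      _ = 9 * ∑ x ∈ Sn, ((TT t).filter fun v => x ∈ A v).card := by rw [h4]
      _ ≤ 9 * (Sn.card * ((mm t + 1) * KK t)) := Nat.mul_le_mul_left _ h5
      _ = 9 * ((mm t + 1) * KK t) * Sn.card := by ring
  -- facts about members of Sn
  have hSnfacts : ∀ x ∈ Sn, (∀ i, x.1 i ≤ t) ∧ (∀ i, x.2 i ≤ t) ∧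
      (∀ i, ptR t x.1 i ∈ Set.Icc (0.01:ℝ) 0.99) ∧ (∀ i, ptR t x.2 i ∈ Set.Icc (0.01:ℝ) 0.99) ∧
      enorm (ptR t x.1 - ptR t x.2) ≤ 1 / Real.sqrt t ∧ lossP F t x.1 x.2 := by
    intro x hx
    obtain ⟨v, hv, hxA⟩ := Finset.mem_biUnion.mp hx
    obtain ⟨⟨h1, h2⟩, h3⟩ := hmemA v hv x hxA
    have hkm := (hkf v hv).1
    have hicc : ∀ a : Fin 3 → ℕ, a ∈ win t v (kf v) →
        ∀ i, ptR t a i ∈ Set.Icc (0.01:ℝ) 0.99 := by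
      intro a ha
      unfold win at ha
      rcases Finset.mem_union.mp ha with h | h
      · exact pt_icc ht hv h
      · exact pt_icc ht hv h
    exact ⟨win_le_t ht hv h1, win_le_t ht hv h2, hicc _ h1, hicc _ h2,
      win_dist ht hkm hv h1 h2, h3⟩
  -- injection into the target set
  set S := ((Finset.univ : Finset ((Fin 3 → Fin (t + 1)) × (Fin 3 → Fin (t + 1)))).filter
            (fun ab =>
              (∀ i, gridPt t ab.1 i ∈ Set.Icc (0.01 : ℝ) 0.99) ∧
              (∀ i, gridPt t ab.2 i ∈ Set.Icc (0.01 : ℝ) 0.99) ∧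
              enorm (gridPt t ab.1 - gridPt t ab.2) ≤ 1 / Real.sqrt t ∧
              V (gridPt t ab.1) - G F (gridPt t ab.1) (gridPt t ab.2) ≥ 0.01)) with hSdef
  have hcard : Sn.card ≤ S.card := by
    apply Finset.card_le_card_of_injOn (fun x => (toFin t x.1, toFin t x.2))
    · intro x hx
      obtain ⟨hb1, hb2, hi1, hi2, hd, hl⟩ := hSnfacts x hx
      rw [hSdef]
      refine Finset.mem_filter.mpr ⟨Finset.mem_univ _, ?_, ?_, ?_, ?_⟩
      · intro i; rw [gridPt_toFin hb1]; exact hi1 i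
      · intro i; rw [gridPt_toFin hb2]; exact hi2 i
      · rw [gridPt_toFin hb1, gridPt_toFin hb2]; exact hd
      · rw [gridPt_toFin hb1, gridPt_toFin hb2]; exact hl
    · intro x hx y hy he
      obtain ⟨hbx1, hbx2, -⟩ := hSnfacts x hx
      obtain ⟨hby1, hby2, -⟩ := hSnfacts y hy
      have he1 : toFin t x.1 = toFin t y.1 := congrArg Prod.fst he
      have he2 : toFin t x.2 = toFin t y.2 := congrArg Prod.snd he
      have hx1 : x.1 = y.1 := by
        funext i
        have hval : x.1 i % (t+1) = y.1 i % (t+1) := by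
          simpa [toFin] using congrArg Fin.val (congrFun he1 i)
        have hc1 := hbx1 i; have hc2 := hby1 i
        rw [Nat.mod_eq_of_lt (by omega), Nat.mod_eq_of_lt (by omega)] at hval
        exact hval
      have hx2 : x.2 = y.2 := by
        funext i
        have hval : x.2 i % (t+1) = y.2 i % (t+1) := by
          simpa [toFin] using congrArg Fin.val (congrFun he2 i)
        have hc1 := hbx2 i; have hc2 := hby2 i
        rw [Nat.mod_eq_of_lt (by omega), Nat.mod_eq_of_lt (by omega)] at hval
        exact hval
      exact Prod.ext hx1 hx2
  -- numerics
  have ht0 := tpos ht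
  set st := Real.sqrt (t:ℝ) with hstdef
  have hst2 : st^2 = t := Real.sq_sqrt (le_of_lt ht0)
  have hst1000 : (1000:ℝ) ≤ st := by
    rw [hstdef]
    rw [show (1000:ℝ) = Real.sqrt (1000^2) from (Real.sqrt_sq (by norm_num)).symm]
    apply Real.sqrt_le_sqrt
    norm_num
    exact_mod_cast ht
  have hsle : ((Nat.sqrt t : ℕ) : ℝ) ≤ st := by
    have e1 : ((Nat.sqrt t:ℕ):ℝ) = Real.sqrt (((Nat.sqrt t * Nat.sqrt t : ℕ):ℝ)) := by
      push_cast
      rw [show ((Nat.sqrt t:ℝ) * (Nat.sqrt t:ℝ)) = ((Nat.sqrt t:ℕ):ℝ)^2 by push_cast; ring]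
      rw [Real.sqrt_sq (by positivity)]
    rw [e1, hstdef]
    apply Real.sqrt_le_sqrt
    have h0 : Nat.sqrt t * Nat.sqrt t ≤ t := by
      have := Nat.sqrt_le' t
      nlinarith
    exact_mod_cast h0
  have hslt : st < ((Nat.sqrt t:ℕ) : ℝ) + 1 := by
    rw [hstdef]
    apply (Real.sqrt_lt' (by positivity)).mpr
    have h1 : t < (Nat.sqrt t + 1) * (Nat.sqrt t + 1) := by
      have := Nat.lt_succ_sqrt t
      simpa [Nat.succ_eq_add_one] using this
    have h2 : (t:ℝ) < (((Nat.sqrt t:ℕ):ℝ) + 1) * (((Nat.sqrt t:ℕ):ℝ) + 1) := by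
      exact_mod_cast h1
    nlinarith
  have hnnR : st / 7 ≤ (nn t : ℝ) := by
    have h1 := nn_ub4 ht
    have h2 := nn_ge ht
    have h3 : ((Nat.sqrt t : ℕ):ℝ) + 1 ≤ 7 * (nn t : ℝ) := by
      have : Nat.sqrt t + 1 ≤ 7 * nn t := by omega
      exact_mod_cast this
    nlinarith
  have hvvR : st^2/40 ≤ (vv t : ℝ) := by
    have h1 : t ≤ 40 * vv t := by unfold vv; omega
    have h2 : (t:ℝ) ≤ 40 * (vv t : ℝ) := by exact_mod_cast h1
    rw [hst2]
    linarith
  have hmmR : 9*((mm t:ℝ)+1) ≤ 63*st := by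
    have h1 := qq_le ht
    have h2 := sqrt_ge ht
    have h3 : 9 * (mm t + 1) ≤ 63 * Nat.sqrt t := by unfold mm; omega
    have h4 : (9:ℝ) * (mm t + 1) ≤ 63 * ((Nat.sqrt t : ℕ):ℝ) := by exact_mod_cast h3
    nlinarith
  have hkey' : vv t^3 * nn t^6 ≤ 9*(mm t+1)*nn t^3*Sn.card := by
    have e1 : vv t^3 * nn t^6 = (TT t).card * KK t^2 := by rw [card_TT]; unfold KK; ring
    have e2 : 9*((mm t + 1) * KK t)*Sn.card = 9*(mm t+1)*nn t^3*Sn.card := by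
      unfold KK; ring
    omega
  have hkeyR : ((vv t:ℝ))^3 * (nn t:ℝ)^6 ≤ 9*((mm t:ℝ)+1)*(nn t:ℝ)^3 * (Sn.card:ℝ) := by
    exact_mod_cast hkey'
  have hnn0 : (0:ℝ) < (nn t : ℝ) := by
    have := nn_ge ht
    have : (250:ℝ) ≤ (nn t : ℝ) := by exact_mod_cast this
    linarith
  have h6 : (vv t:ℝ)^3 * (nn t:ℝ)^3 ≤ 9*((mm t:ℝ)+1) * (Sn.card:ℝ) := by
    have hnn3 : (0:ℝ) < (nn t:ℝ)^3 := by positivity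
    apply le_of_mul_le_mul_right ?_ hnn3
    calc (vv t:ℝ)^3 * (nn t:ℝ)^3 * (nn t:ℝ)^3 = (vv t:ℝ)^3 * (nn t:ℝ)^6 := by ring
    _ ≤ 9*((mm t:ℝ)+1)*(nn t:ℝ)^3 * (Sn.card:ℝ) := hkeyR
    _ = 9*((mm t:ℝ)+1) * (Sn.card:ℝ) * (nn t:ℝ)^3 := by ring
  have h7 : st^9/21952000 ≤ (vv t:ℝ)^3*(nn t:ℝ)^3 := by
    have ha : (st^2/40)^3 ≤ (vv t:ℝ)^3 := pow_le_pow_left₀ (by positivity) hvvR 3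
    have hb : (st/7)^3 ≤ (nn t:ℝ)^3 := pow_le_pow_left₀ (by positivity) hnnR 3
    calc st^9/21952000 = (st^2/40)^3*(st/7)^3 := by ring
    _ ≤ (vv t:ℝ)^3*(nn t:ℝ)^3 := by
        apply mul_le_mul ha hb (by positivity) (by positivity)
  have hSn0 : (0:ℝ) ≤ (Sn.card:ℝ) := by positivity
  have h8 : st^9/21952000 ≤ 63*st*(Sn.card:ℝ) := by
    calc st^9/21952000 ≤ (vv t:ℝ)^3*(nn t:ℝ)^3 := h7
    _ ≤ 9*((mm t:ℝ)+1) * (Sn.card:ℝ) := h6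
    _ ≤ 63*st*(Sn.card:ℝ) := mul_le_mul_of_nonneg_right hmmR hSn0
  have h9 : st^8 ≤ 1382976000 * (Sn.card:ℝ) := by
    have hst0 : (0:ℝ) < st := by linarith
    apply le_of_mul_le_mul_right ?_ hst0
    calc st^8 * st = 21952000 * (st^9/21952000) := by ring
    _ ≤ 21952000 * (63*st*(Sn.card:ℝ)) := by linarith
    _ = 1382976000 * (Sn.card:ℝ) * st := by ring
  have hfin : (1/10^10:ℝ) * (t:ℝ)^4 ≤ (Sn.card:ℝ) := by
    have ht4 : (t:ℝ)^4 = st^8 := by rw [← hst2]; ring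
    rw [ht4]
    linarith [h9, hSn0]
  calc (1/10^10:ℝ) * (t:ℝ)^4 ≤ (Sn.card:ℝ) := hfin
  _ ≤ (S.card:ℝ) := by exact_mod_cast hcard


end Obstruction

/-- Claim 2.9: for all large `t` and any `F : ℝ³ → {1,2,3}²`, there are
at least `c·t⁴` ordered pairs `(P, Q)` of points of the grid `{0/t, …, t/t}³` with all
coordinates in `[0.01, 0.99]`, `‖P − Q‖₂ ≤ 1/√t`, and `V(P) − G(F, P, Q) ≥ 0.01`
(i.e. `(P,Q)` is a `0.01`-loss for `F`). -/
theorem stmt8 :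
    ∃ c : ℝ, 0 < c ∧ ∃ t₀ : ℕ, ∀ t : ℕ, t₀ ≤ t →
      ∀ F : (Fin 3 → ℝ) → Fin 3 × Fin 3,
        c * (t : ℝ) ^ 4 ≤
          ((Finset.univ : Finset ((Fin 3 → Fin (t + 1)) × (Fin 3 → Fin (t + 1)))).filter
            (fun ab =>
              (∀ i, Obstruction.gridPt t ab.1 i ∈ Set.Icc (0.01 : ℝ) 0.99) ∧
              (∀ i, Obstruction.gridPt t ab.2 i ∈ Set.Icc (0.01 : ℝ) 0.99) ∧
              Obstruction.enorm (Obstruction.gridPt t ab.1 - Obstruction.gridPt t ab.2)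
                ≤ 1 / Real.sqrt t ∧
              Obstruction.V (Obstruction.gridPt t ab.1) -
                Obstruction.G F (Obstruction.gridPt t ab.1) (Obstruction.gridPt t ab.2)
                ≥ 0.01)).card := by
  refine ⟨1/10^10, by norm_num, 10^6, fun t ht F => ?_⟩
  exact Obstruction.main_count ht F
end

section
/- Let K > m ≥ 1. For any function G: T_{K,m} → (subsets of [K] of size m) such that G(P) ∈ Feas_P for all P ∈ T_{K,m}, there exists a collision-robust m-coloring F: T_{K,m} → [K]^m such that for every P ∈ T_{K,m}, the tuple F(P) is a permutation of the set G(P). -/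
open scoped Classical BigOperators

namespace TreeKM

variable {K : ℕ}

/-- One step down the tree `T_{K,m}`: the current state is the pair
`(A(P), B(P))` (identified top arms, current undecided block), and a child is obtained
by splitting `B(P)` into a top part `C` and a bottom part `B(P) \ C`. The new state is
computed exactly as in the definition of `A(·)` and `B(·)` for doubly ordered
partitions: if `|A| + |C| ≤ m` the top part is absorbed into `A` (and `B` becomes empty
when `|A| + |C| = m`, giving a leaf), and otherwise the new undecided block is `C`. -/
def step (m : ℕ) (A B C : Finset (Fin K)) : Finset (Fin K) × Finset (Fin K) :=
  if A.card + C.card ≤ m then (A ∪ C, if A.card + C.card = m then ∅ else B \ C)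
  else (A, C)

/-- The state `(A(P), B(P))` of a vertex of `T_{K,m}`, encoded by the list of successive
top parts chosen along the path from the root (most recent split first). At the root,
`A = ∅` and `B = [K]`. -/
def stateOf (m : ℕ) : List (Finset (Fin K)) → Finset (Fin K) × Finset (Fin K)
  | [] => (∅, Finset.univ)
  | C :: rest => step m (stateOf m rest).1 (stateOf m rest).2 C

/-- Validity of a path from the root in `T_{K,m}`: each successive split must cut the
current undecided block `B(P)` into two nonempty parts. -/
def Valid (m : ℕ) : List (Finset (Fin K)) → Prop
  | [] => True
  | C :: rest => Valid m rest ∧ C.Nonempty ∧ C ⊂ (stateOf m rest).2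

/-- A vertex of the tree `T_{K,m}`, identified with its path from the root. -/
def Vertex (K m : ℕ) : Type := {l : List (Finset (Fin K)) // Valid m l}

/-- `Feas_P`: the `m`-element subsets of `[K]` that arise as the set of top `m` elements
in some total ordering consistent with `P`; equivalently, the sets consisting of `A(P)`
together with `m - |A(P)|` elements of `B(P)`. -/
def Feas {K : ℕ} (m : ℕ) (P : Vertex K m) : Set (Finset (Fin K)) :=
  {S | S.card = m ∧ (stateOf m P.1).1 ⊆ S ∧ S \ (stateOf m P.1).1 ⊆ (stateOf m P.1).2}

/-- Two vertices of `T_{K,m}` are at tree distance at most `1`: they are equal, or one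
is obtained from the other by one extra split. -/
def Adjacent {K m : ℕ} (P Q : Vertex K m) : Prop :=
  P.1 = Q.1 ∨ (∃ C, P.1 = C :: Q.1) ∨ (∃ C, Q.1 = C :: P.1)

/-- An `m`-coloring `F = (f_1, …, f_m)` of `T_{K,m}` is collision-robust if whenever
`P, Q` are at tree distance at most `1` and `f_i(P) = f_j(Q)`, necessarily `i = j`. -/
def CollisionRobust {K m : ℕ} (F : Vertex K m → Fin m → Fin K) : Prop :=
  ∀ P Q : Vertex K m, Adjacent P Q → ∀ i j : Fin m, F P i = F Q j → i = j

end TreeKM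

namespace Stmt12Aux

variable {K : ℕ}

/-- Key step: given an injective `g : Fin m → Fin K` and a target `m`-set `S`, there is
an injective enumeration `f` of `S` compatible with `g`: any value shared by `f` and `g`
occurs at the same index. -/
lemma key (m : ℕ) (S : Finset (Fin K)) (g : Fin m → Fin K) :
    ∃ f : Fin m → Fin K, S.card = m → Function.Injective g →
      Function.Injective f ∧ Finset.image f Finset.univ = S ∧
        ∀ i j, f i = g j → i = j := by
  by_cases H : S.card = m ∧ Function.Injective g
  · obtain ⟨hS, hg⟩ := H
    set T : Finset (Fin K) := Finset.image g Finset.univ with hTdef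
    have hmemT : ∀ i, g i ∈ T := fun i => Finset.mem_image_of_mem _ (Finset.mem_univ i)
    set D1 : Finset (Fin m) := Finset.univ.filter (fun i => g i ∉ S) with hD1
    set D2 : Finset (Fin K) := S \ T with hD2
    have himg : Finset.image g (Finset.univ.filter (fun i => g i ∈ S)) = T ∩ S := by
      ext x
      simp only [Finset.mem_image, Finset.mem_filter, Finset.mem_univ, true_and,
        Finset.mem_inter, hTdef]
      constructor
      · rintro ⟨i, hi, rfl⟩; exact ⟨⟨i, rfl⟩, hi⟩
      · rintro ⟨⟨i, rfl⟩, hx⟩; exact ⟨i, hx, rfl⟩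
    have hcard1 : (Finset.univ.filter (fun i => g i ∈ S)).card = (T ∩ S).card := by
      rw [← himg, Finset.card_image_of_injective _ hg]
    have hsplit : (Finset.univ.filter (fun i => g i ∈ S)).card + D1.card = m := by
      rw [hD1, Finset.card_filter_add_card_filter_not, Finset.card_univ,
        Fintype.card_fin]
    have hD2card : D2.card + (S ∩ T).card = m := by
      rw [hD2, Finset.card_sdiff_add_card_inter, hS]
    have hcards : Fintype.card D1 = Fintype.card D2 := by
      rw [Fintype.card_coe, Fintype.card_coe]
      rw [Finset.inter_comm] at hD2card
      omega
    let β : D1 ≃ D2 := Fintype.equivOfCardEq hcards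
    have hmem1 : ∀ i : Fin m, g i ∉ S → i ∈ D1 := by
      intro i hi; simp [hD1, hi]
    refine ⟨fun i => if h : g i ∈ S then g i else (β ⟨i, hmem1 i h⟩ : Fin K),
      fun _ _ => ⟨?_, ?_, ?_⟩⟩
    · -- injectivity
      intro a b hab
      by_cases ha : g a ∈ S <;> by_cases hb : g b ∈ S <;>
        simp only [ha, hb, dif_pos, dif_neg, not_false_iff] at hab
      · exact hg hab
      · exact absurd (hab ▸ hmemT a) (Finset.mem_sdiff.mp (β ⟨b, hmem1 b hb⟩).2).2
      · exact absurd (hab ▸ hmemT b) (Finset.mem_sdiff.mp (β ⟨a, hmem1 a ha⟩).2).2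
      · have := β.injective (Subtype.ext hab)
        exact congrArg Subtype.val this
    · -- image
      have hsub : ∀ i : Fin m,
          (if h : g i ∈ S then g i else (β ⟨i, hmem1 i h⟩ : Fin K)) ∈ S := by
        intro i
        by_cases h : g i ∈ S
        · simpa [h] using h
        · simp only [h, dif_neg, not_false_iff]
          exact (Finset.mem_sdiff.mp (β ⟨i, hmem1 i h⟩).2).1
      apply Finset.eq_of_subset_of_card_le
      · intro x hx
        obtain ⟨i, -, rfl⟩ := Finset.mem_image.mp hx
        exact hsub i
      · rw [hS]
        have hinj : Function.Injective
            (fun i : Fin m => if h : g i ∈ S then g i else (β ⟨i, hmem1 i h⟩ : Fin K)) := by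
          intro a b hab
          by_cases ha : g a ∈ S <;> by_cases hb : g b ∈ S <;>
            simp only [ha, hb, dif_pos, dif_neg, not_false_iff] at hab
          · exact hg hab
          · exact absurd (hab ▸ hmemT a) (Finset.mem_sdiff.mp (β ⟨b, hmem1 b hb⟩).2).2
          · exact absurd (hab ▸ hmemT b) (Finset.mem_sdiff.mp (β ⟨a, hmem1 a ha⟩).2).2
          · exact congrArg Subtype.val (β.injective (Subtype.ext hab))
        rw [Finset.card_image_of_injective _ hinj, Finset.card_univ, Fintype.card_fin]
    · -- compatibility
      intro i j hij
      by_cases h : g i ∈ S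
      · simp only [h, dif_pos] at hij
        exact hg hij
      · simp only [h, dif_neg, not_false_iff] at hij
        exact absurd (hij ▸ hmemT j) (Finset.mem_sdiff.mp (β ⟨i, hmem1 i h⟩).2).2
  · exact ⟨g, fun h1 h2 => absurd ⟨h1, h2⟩ H⟩

/-- A fallback `m`-subset of `Fin K`, used to make the recursion total. -/
def defSet (K m : ℕ) (h : m ≤ K) : Finset (Fin K) :=
  Finset.map ⟨Fin.castLE h, Fin.castLE_injective h⟩ Finset.univ

lemma defSet_card (K m : ℕ) (h : m ≤ K) : (defSet K m h).card = m := by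
  simp [defSet]

/-- A totalized version of `G` on lists, forced to take values of cardinality `m`. -/
noncomputable def G2 (K m : ℕ) (h : m ≤ K) (G : TreeKM.Vertex K m → Finset (Fin K))
    (l : List (Finset (Fin K))) : Finset (Fin K) :=
  if hv : TreeKM.Valid m l then
    (if (G ⟨l, hv⟩).card = m then G ⟨l, hv⟩ else defSet K m h)
  else defSet K m h

lemma G2_card (K m : ℕ) (h : m ≤ K) (G : TreeKM.Vertex K m → Finset (Fin K))
    (l : List (Finset (Fin K))) : (G2 K m h G l).card = m := by
  unfold G2
  split
  · split
    · assumption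
    · exact defSet_card K m h
  · exact defSet_card K m h

lemma G2_eq (K m : ℕ) (h : m ≤ K) (G : TreeKM.Vertex K m → Finset (Fin K))
    (P : TreeKM.Vertex K m) (hc : (G P).card = m) : G2 K m h G P.1 = G P := by
  obtain ⟨l, hv⟩ := P
  simp only [G2, dif_pos hv, hc, if_pos]

/-- The recursive construction of the coloring along a path. -/
noncomputable def build (K m : ℕ) (h : m ≤ K) (G : TreeKM.Vertex K m → Finset (Fin K)) :
    List (Finset (Fin K)) → (Fin m → Fin K)
  | [] => (key m (G2 K m h G []) (Fin.castLE h)).choose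
  | C :: rest => (key m (G2 K m h G (C :: rest)) (build K m h G rest)).choose

lemma build_spec (K m : ℕ) (h : m ≤ K) (G : TreeKM.Vertex K m → Finset (Fin K)) :
    ∀ l : List (Finset (Fin K)),
      Function.Injective (build K m h G l) ∧
        Finset.image (build K m h G l) Finset.univ = G2 K m h G l := by
  intro l
  induction l with
  | nil =>
      have := (key m (G2 K m h G []) (Fin.castLE h)).choose_spec
        (G2_card K m h G []) (Fin.castLE_injective h)
      exact ⟨this.1, this.2.1⟩
  | cons C rest ih =>
      have := (key m (G2 K m h G (C :: rest)) (build K m h G rest)).choose_spec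
        (G2_card K m h G (C :: rest)) ih.1
      exact ⟨this.1, this.2.1⟩

lemma build_compat (K m : ℕ) (h : m ≤ K) (G : TreeKM.Vertex K m → Finset (Fin K))
    (C : Finset (Fin K)) (rest : List (Finset (Fin K))) :
    ∀ i j, build K m h G (C :: rest) i = build K m h G rest j → i = j :=
  ((key m (G2 K m h G (C :: rest)) (build K m h G rest)).choose_spec
    (G2_card K m h G (C :: rest)) (build_spec K m h G rest).1).2.2

end Stmt12Aux

/-- Lemma 2.4 of Bubeck et al.: for any selection `G` of a feasible
`m`-set `G(P) ∈ Feas_P` at each vertex `P` of `T_{K,m}`, there is a collision-robust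
`m`-coloring `F` of `T_{K,m}` such that each tuple `F(P)` is a permutation
(an injective enumeration) of the set `G(P)`. -/
theorem stmt12 (K m : ℕ) (hm : 1 ≤ m) (hmK : m < K)
    (G : TreeKM.Vertex K m → Finset (Fin K)) (hG : ∀ P, G P ∈ TreeKM.Feas m P) :
    ∃ F : TreeKM.Vertex K m → Fin m → Fin K, TreeKM.CollisionRobust F ∧
      ∀ P : TreeKM.Vertex K m,
        Function.Injective (F P) ∧ Finset.image (F P) Finset.univ = G P := by
  have h : m ≤ K := hmK.le
  refine ⟨fun P => Stmt12Aux.build K m h G P.1, ?_, ?_⟩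
  · -- collision robustness
    rintro P Q (hPQ | ⟨C, hPQ⟩ | ⟨C, hPQ⟩) i j hij <;> dsimp only at hij
    · rw [hPQ] at hij
      exact (Stmt12Aux.build_spec K m h G Q.1).1 hij
    · rw [hPQ] at hij
      exact Stmt12Aux.build_compat K m h G C Q.1 i j hij
    · rw [hPQ] at hij
      exact (Stmt12Aux.build_compat K m h G C P.1 j i hij.symm).symm
  · intro P
    have hc : (G P).card = m := (hG P).1
    have := Stmt12Aux.build_spec K m h G P.1
    rw [Stmt12Aux.G2_eq K m h G P hc] at this
    exact this
end

section
/- In the full-information multi-player bandit with m players and K arms, suppose the instance is p_ext, consisting of a set S₁ of arms of mean reward 1, a set S₀ of arms of mean reward 0, and remaining arms with means in [0.01, 0.99]. Fix a time step t and, for each arm a and player X, let q_a^X denote the probability that player X plays arm a at time t. Then the expected regret incurred at time t is at least c·( Σ_{a ∈ S₁} [ Π_{X=1}^m (1 − q_a^X) + ( Π_{X=1}^m (1 − q_a^X) + q_a^1 + ... + q_a^m − 1 ) ] + Σ_{a ∈ S₀} ( q_a^1 + ... + q_a^m ) ) for an absolute constant c > 0, provided the arms' observation randomness across players is independent. -/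
open scoped Classical BigOperators

namespace FullInfo

/-- Pre-sampled Bernoulli observations: at each round every player observes a full
reward vector; `ω t X i` is the Bernoulli(`p i`) observation of player `X` for arm `i`
at time `t`. -/
abbrev Outcome (T m K : ℕ) := Fin T → Fin m → Fin K → Bool

/-- Probability of a full outcome table under the instance `p`. -/
noncomputable def weight {T m K : ℕ} (p : Fin K → ℝ) (ω : Outcome T m K) : ℝ :=
  ∏ t : Fin T, ∏ X : Fin m, ∏ i : Fin K, (if ω t X i then p i else 1 - p i)

/-- A deterministic full-information strategy: each player maps its own list of past
observed reward vectors to the arm it pulls next. -/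
abbrev DetStrat (m K : ℕ) := Fin m → List (Fin K → Bool) → Fin K

/-- The observation history of player `X` before time `t`. -/
def hist {T m K : ℕ} (ω : Outcome T m K) (X : Fin m) : ℕ → List (Fin K → Bool)
  | 0 => []
  | t + 1 =>
      let h := hist ω X t
      if ht : t < T then h ++ [fun i => ω ⟨t, ht⟩ X i] else h

/-- The arm played by player `X` at time `t`. -/
def arm {T m K : ℕ} (σ : DetStrat m K) (ω : Outcome T m K) (X : Fin m) (t : Fin T) : Fin K :=
  σ X (hist ω X t.1)

/-- The reward received by player `X` at time `t`: its observed Bernoulli reward for the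
pulled arm, provided no other player pulls the same arm at the same time. -/
noncomputable def stepReward {T m K : ℕ} (σ : DetStrat m K) (ω : Outcome T m K)
    (t : Fin T) : ℝ :=
  ∑ X : Fin m,
    (if ω t X (arm σ ω X t) = true ∧ (∀ Y : Fin m, Y ≠ X → arm σ ω Y t ≠ arm σ ω X t)
      then (1 : ℝ) else 0)

/-- Total received reward over the horizon. -/
noncomputable def totalReward {T m K : ℕ} (σ : DetStrat m K) (ω : Outcome T m K) : ℝ :=
  ∑ t : Fin T, stepReward σ ω t

/-- Expected total received reward of a deterministic strategy on instance `p`. -/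
noncomputable def detER (T : ℕ) {m K : ℕ} (p : Fin K → ℝ) (σ : DetStrat m K) : ℝ :=
  ∑ ω : Outcome T m K, weight p ω * totalReward σ ω

/-- An algorithm: a distribution (shared randomness, fixed before play)
over deterministic strategies. -/
abbrev Algo (m K : ℕ) := PMF (DetStrat m K)

/-- Expected regret `R_T(A; p)` of algorithm `A` on instance `p` at horizon `T`. -/
noncomputable def regret (T : ℕ) {m K : ℕ} (A : Algo m K) (p : Fin K → ℝ) : ℝ :=
  (T : ℝ) * (∑ i : Fin K, if (i : ℕ) < m then p i else 0)
    - ∑' σ : DetStrat m K, (A σ).toReal * detER T p σ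

/-- An instance: mean rewards in `[0,1]`, sorted in decreasing order. -/
def IsInstance {K : ℕ} (p : Fin K → ℝ) : Prop :=
  (∀ i, p i ∈ Set.Icc (0 : ℝ) 1) ∧ Antitone p

/-- The gap `Δ(p) = p_m - p_{m+1}` between the `m`-th and `(m+1)`-st best arms. -/
noncomputable def gap {K : ℕ} (m : ℕ) (p : Fin K → ℝ) : ℝ :=
  if h : m < K then p ⟨m - 1, Nat.lt_of_le_of_lt (Nat.sub_le m 1) h⟩ - p ⟨m, h⟩ else 0

/-- A deterministic strategy is mean-based if each player's action depends only on the
round index and the empirical means (equivalently, the counts) of its observations. -/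
def MeanBasedStrat {m K : ℕ} (σ : DetStrat m K) : Prop :=
  ∀ (X : Fin m) (h h' : List (Fin K → Bool)), h.length = h'.length →
    (∀ i : Fin K, h.countP (fun v => v i) = h'.countP (fun v => v i)) →
    σ X h = σ X h'

/-- An algorithm is mean-based if it is supported on mean-based strategies. -/
def MeanBased {m K : ℕ} (A : Algo m K) : Prop :=
  ∀ σ ∈ A.support, MeanBasedStrat σ

end FullInfo

namespace FullInfo

/-- `q_a^X`: the probability (over the observation randomness only) that player `X`
plays arm `a` at time `t` under the deterministic strategy `σ` on instance `p`. -/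
noncomputable def armProb (T : ℕ) {m K : ℕ} (p : Fin K → ℝ) (σ : DetStrat m K)
    (t : Fin T) (X : Fin m) (a : Fin K) : ℝ :=
  ∑ ω : Outcome T m K, weight p ω * (if arm σ ω X t = a then (1 : ℝ) else 0)

/-- The expected total received reward at the single time step `t`. -/
noncomputable def stepER (T : ℕ) {m K : ℕ} (p : Fin K → ℝ) (σ : DetStrat m K)
    (t : Fin T) : ℝ :=
  ∑ ω : Outcome T m K, weight p ω * stepReward σ ω t

end FullInfo

set_option maxHeartbeats 1000000

namespace FullInfo

-- ====== machinery ======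

lemma sum_fn_prod {α β : Type*} [Fintype α] [DecidableEq α] [Fintype β] (h : α → β → ℝ) :
    ∑ f : α → β, ∏ x : α, h x (f x) = ∏ x : α, ∑ y : β, h x y :=
  (Fintype.prod_sum h).symm

noncomputable def wVec {K : ℕ} (p : Fin K → ℝ) (v : Fin K → Bool) : ℝ :=
  ∏ i, if v i then p i else 1 - p i

lemma sum_wVec {K : ℕ} (p : Fin K → ℝ) : ∑ v : Fin K → Bool, wVec p v = 1 := by
  unfold wVec
  rw [sum_fn_prod (fun i (b : Bool) => if b then p i else 1 - p i)]
  simp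

lemma sum_wVec_ind {K : ℕ} (p : Fin K → ℝ) (a : Fin K) :
    ∑ v : Fin K → Bool, wVec p v * (if v a then 1 else 0) = p a := by
  have h1 : ∀ v : Fin K → Bool, wVec p v * (if v a then 1 else 0)
      = ∏ i, ((if v i then p i else 1 - p i) * (if i = a then (if v i then 1 else 0) else 1)) := by
    intro v
    rw [Finset.prod_mul_distrib]
    congr 1
    rw [Finset.prod_ite_eq' Finset.univ a (fun i => if v i then (1:ℝ) else 0)]
    simp
  simp_rw [h1]
  rw [sum_fn_prod (fun i (b : Bool) => (if b then p i else 1 - p i) * (if i = a then (if b then 1 else 0) else 1))]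
  have h2 : ∀ i : Fin K, (∑ b : Bool, (if b then p i else 1 - p i) * (if i = a then (if b then 1 else 0) else 1)) = if i = a then p i else 1 := by
    intro i
    by_cases h : i = a <;> simp [h]
  simp_rw [h2]
  simp

noncomputable def wFam {α : Type*} [Fintype α] {K : ℕ} (p : Fin K → ℝ)
    (u : α → Fin K → Bool) : ℝ := ∏ x, wVec p (u x)

lemma sum_wFam {α : Type*} [Fintype α] [DecidableEq α] {K : ℕ} (p : Fin K → ℝ) :
    ∑ u : α → Fin K → Bool, wFam p u = 1 := by
  unfold wFam
  rw [sum_fn_prod (fun (_ : α) v => wVec p v)]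
  simp [sum_wVec]

lemma sum_wFam_ind {α : Type*} [Fintype α] [DecidableEq α] {K : ℕ} (p : Fin K → ℝ)
    (X : α) (a : Fin K) :
    ∑ u : α → Fin K → Bool, wFam p u * (if u X a then 1 else 0) = p a := by
  have h1 : ∀ u : α → Fin K → Bool, wFam p u * (if u X a then 1 else 0)
      = ∏ x, (wVec p (u x) * (if x = X then (if u x a then 1 else 0) else 1)) := by
    intro u
    rw [Finset.prod_mul_distrib]
    unfold wFam
    congr 1
    rw [Finset.prod_ite_eq' Finset.univ X (fun x => if u x a then (1:ℝ) else 0)]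
    simp
  simp_rw [h1]
  rw [sum_fn_prod (fun x (v : Fin K → Bool) => wVec p v * (if x = X then (if v a then 1 else 0) else 1))]
  have h2 : ∀ x : α, (∑ v : Fin K → Bool, wVec p v * (if x = X then (if v a then 1 else 0) else 1)) = if x = X then p a else 1 := by
    intro x
    by_cases h : x = X
    · simp only [h, if_true]
      exact sum_wVec_ind p a
    · simp [h, sum_wVec]
  simp_rw [h2]
  simp

-- single-player history and arm
def histP {T K : ℕ} (u : Fin T → Fin K → Bool) : ℕ → List (Fin K → Bool)
  | 0 => []
  | t + 1 =>
      let h := histP u t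
      if ht : t < T then h ++ [fun i => u ⟨t, ht⟩ i] else h

noncomputable def armP {T m K : ℕ} (σ : DetStrat m K) (X : Fin m)
    (u : Fin T → Fin K → Bool) (t : Fin T) : Fin K :=
  σ X (histP u t.1)

lemma hist_eq_histP {T m K : ℕ} (ω : Outcome T m K) (X : Fin m) (n : ℕ) :
    hist ω X n = histP (fun s i => ω s X i) n := by
  induction n with
  | zero => rfl
  | succ k ih => simp only [hist, histP, ih]

lemma arm_eq_armP {T m K : ℕ} (σ : DetStrat m K) (ω : Outcome T m K) (X : Fin m) (t : Fin T) :
    arm σ ω X t = armP σ X (fun s i => ω s X i) t := by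
  unfold arm armP
  rw [hist_eq_histP]

-- flip equiv
def flipE (T m K : ℕ) : Outcome T m K ≃ (Fin m → Fin T → Fin K → Bool) where
  toFun ω := fun X s i => ω s X i
  invFun ν := fun s X i => ν X s i
  left_inv ω := rfl
  right_inv ν := rfl

lemma weight_eq_prod_player {T m K : ℕ} (p : Fin K → ℝ) (ω : Outcome T m K) :
    weight p ω = ∏ X : Fin m, wFam p (fun s i => ω s X i) := by
  unfold weight wFam wVec
  rw [Finset.prod_comm]

-- player factorization
lemma player_factor {T m K : ℕ} (H : Fin m → (Fin T → Fin K → Bool) → ℝ) :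
    ∑ ω : Outcome T m K, ∏ X : Fin m, H X (fun s i => ω s X i)
      = ∏ X : Fin m, ∑ u : Fin T → Fin K → Bool, H X u := by
  rw [← sum_fn_prod H]
  exact Fintype.sum_equiv (flipE T m K) _ _ (fun ω => rfl)

lemma mass {T m K : ℕ} (p : Fin K → ℝ) : ∑ ω : Outcome T m K, weight p ω = 1 := by
  have h : ∀ ω : Outcome T m K, weight p ω = ∏ X : Fin m, wFam p (fun s i => ω s X i) :=
    weight_eq_prod_player p
  rw [Finset.sum_congr rfl (fun ω _ => h ω), player_factor (fun _ u => wFam p u)]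
  simp [sum_wFam]

lemma weight_nonneg {T m K : ℕ} {p : Fin K → ℝ} (h01 : ∀ i, p i ∈ Set.Icc (0:ℝ) 1)
    (ω : Outcome T m K) : 0 ≤ weight p ω := by
  unfold weight
  apply Finset.prod_nonneg; intro t _
  apply Finset.prod_nonneg; intro X _
  apply Finset.prod_nonneg; intro i _
  have := h01 i
  by_cases h : ω t X i <;> simp [h] <;> [exact this.1; linarith [this.2]]

lemma armProb_eq_single {T m K : ℕ} (p : Fin K → ℝ) (σ : DetStrat m K)
    (t : Fin T) (X : Fin m) (a : Fin K) :
    armProb T p σ t X a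
      = ∑ u : Fin T → Fin K → Bool, wFam p u * (if armP σ X u t = a then 1 else 0) := by
  unfold armProb
  have h : ∀ ω : Outcome T m K, weight p ω * (if arm σ ω X t = a then (1:ℝ) else 0)
      = ∏ Y : Fin m, (wFam p (fun s i => ω s Y i)
          * (if Y = X then (if armP σ Y (fun s i => ω s Y i) t = a then 1 else 0) else 1)) := by
    intro ω
    rw [Finset.prod_mul_distrib, ← weight_eq_prod_player]
    congr 1
    rw [Finset.prod_ite_eq' Finset.univ X
      (fun Y => if armP σ Y (fun s i => ω s Y i) t = a then (1:ℝ) else 0)]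
    rw [arm_eq_armP]
    simp
  rw [Finset.sum_congr rfl (fun ω _ => h ω),
    player_factor (fun Y u => wFam p u * (if Y = X then (if armP σ Y u t = a then 1 else 0) else 1))]
  have h2 : ∀ Y : Fin m, (∑ u : Fin T → Fin K → Bool,
      wFam p u * (if Y = X then (if armP σ Y u t = a then 1 else 0) else 1))
      = if Y = X then (∑ u : Fin T → Fin K → Bool, wFam p u * (if armP σ X u t = a then 1 else 0)) else 1 := by
    intro Y
    by_cases hY : Y = X
    · subst hY; simp
    · simp [hY, sum_wFam]
  rw [Finset.prod_congr rfl (fun Y _ => h2 Y)]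
  rw [Finset.prod_ite_eq' Finset.univ X
    (fun _ => ∑ u : Fin T → Fin K → Bool, wFam p u * (if armP σ X u t = a then 1 else 0))]
  simp

lemma noneProb {T m K : ℕ} (p : Fin K → ℝ) (σ : DetStrat m K)
    (t : Fin T) (a : Fin K) :
    ∑ ω : Outcome T m K, weight p ω * (if ∀ X : Fin m, arm σ ω X t ≠ a then (1:ℝ) else 0)
      = ∏ X : Fin m, (1 - armProb T p σ t X a) := by
  have h : ∀ ω : Outcome T m K,
      weight p ω * (if ∀ X : Fin m, arm σ ω X t ≠ a then (1:ℝ) else 0)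
      = ∏ X : Fin m, (wFam p (fun s i => ω s X i)
          * (if armP σ X (fun s i => ω s X i) t ≠ a then 1 else 0)) := by
    intro ω
    rw [Finset.prod_mul_distrib, ← weight_eq_prod_player]
    congr 1
    rw [Finset.prod_boole]
    congr 1
    simp only [eq_iff_iff]
    constructor
    · intro hall X _
      rw [← arm_eq_armP]
      exact hall X
    · intro hall X
      rw [arm_eq_armP]
      exact hall X (Finset.mem_univ X)
  rw [Finset.sum_congr rfl (fun ω _ => h ω),
    player_factor (fun X u => wFam p u * (if armP σ X u t ≠ a then 1 else 0))]
  apply Finset.prod_congr rfl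
  intro X _
  rw [armProb_eq_single]
  have : ∀ u : Fin T → Fin K → Bool,
      wFam p u * (if armP σ X u t ≠ a then (1:ℝ) else 0)
      = wFam p u - wFam p u * (if armP σ X u t = a then 1 else 0) := by
    intro u
    by_cases h : armP σ X u t = a <;> simp [h]
  rw [Finset.sum_congr rfl (fun u _ => this u), Finset.sum_sub_distrib, sum_wFam]

lemma ind_and (P Q : Prop) : (if (P ∧ Q) then (1:ℝ) else 0) = (if P then 1 else 0) * (if Q then 1 else 0) := by
  by_cases hP : P <;> by_cases hQ : Q <;> simp [hP, hQ]

lemma hist_congr {T m K : ℕ} (ω ω' : Outcome T m K) (X : Fin m) :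
    ∀ n : ℕ, (∀ s : Fin T, (s:ℕ) < n → ω s X = ω' s X) → hist ω X n = hist ω' X n := by
  intro n
  induction n with
  | zero => intro _; rfl
  | succ k ih =>
    intro h
    simp only [hist]
    rw [ih (fun s hs => h s (Nat.lt_succ_of_lt hs))]
    by_cases ht : k < T
    · simp only [dif_pos ht]
      have : ω ⟨k, ht⟩ X = ω' ⟨k, ht⟩ X := h ⟨k, ht⟩ (Nat.lt_succ_self k)
      rw [this]
    · simp only [dif_neg ht]

noncomputable def wRest {T m K : ℕ} (p : Fin K → ℝ) (t : Fin T)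
    (r : {s : Fin T // s ≠ t} → Fin m → Fin K → Bool) : ℝ := ∏ s, wFam p (r s)

lemma stepER_eq {T m K : ℕ} (p : Fin K → ℝ) (σ : DetStrat m K) (t : Fin T) :
    stepER T p σ t = ∑ ω : Outcome T m K, weight p ω *
      (∑ X : Fin m, p (arm σ ω X t) *
        (if (∀ Y : Fin m, Y ≠ X → arm σ ω Y t ≠ arm σ ω X t) then (1:ℝ) else 0)) := by
  classical
  set e := Equiv.funSplitAt t (Fin m → Fin K → Bool) with he
  have g1 : ∀ (c : Fin m → Fin K → Bool) (r : {s : Fin T // s ≠ t} → Fin m → Fin K → Bool),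
      e.symm (c, r) t = c := by
    intro c r; simp [he]
  have g2 : ∀ (c : Fin m → Fin K → Bool) (r : {s : Fin T // s ≠ t} → Fin m → Fin K → Bool)
      (s : Fin T) (hs : s ≠ t), e.symm (c, r) s = r ⟨s, hs⟩ := by
    intro c r s hs; simp [he, hs]
  set c0 : Fin m → Fin K → Bool := fun _ _ => false with hc0
  set AR : ({s : Fin T // s ≠ t} → Fin m → Fin K → Bool) → Fin m → Fin K :=
    fun r X => arm σ (e.symm (c0, r)) X t with hAR
  set IU : ({s : Fin T // s ≠ t} → Fin m → Fin K → Bool) → Fin m → ℝ :=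
    fun r X => if (∀ Y : Fin m, Y ≠ X → AR r Y ≠ AR r X) then (1:ℝ) else 0 with hIU
  have harm : ∀ (c : Fin m → Fin K → Bool) (r : {s : Fin T // s ≠ t} → Fin m → Fin K → Bool)
      (X : Fin m), arm σ (e.symm (c, r)) X t = AR r X := by
    intro c r X
    have : arm σ (e.symm (c, r)) X t = arm σ (e.symm (c0, r)) X t := by
      unfold arm
      congr 1
      apply hist_congr
      intro s hs
      have hst : s ≠ t := by
        intro hEq
        rw [hEq] at hs
        exact lt_irrefl _ hs
      rw [g2 c r s hst, g2 c0 r s hst]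
    rw [this, hAR]
  have wglue : ∀ (c : Fin m → Fin K → Bool) (r : {s : Fin T // s ≠ t} → Fin m → Fin K → Bool),
      weight p (e.symm (c, r)) = wFam p c * wRest p t r := by
    intro c r
    have hw : ∀ ω : Outcome T m K, weight p ω = ∏ s : Fin T, wFam p (ω s) := by
      intro ω; rfl
    rw [hw]
    rw [← Finset.mul_prod_erase Finset.univ (fun s => wFam p (e.symm (c, r) s)) (Finset.mem_univ t)]
    congr 1
    · rw [g1 c r]
    · have hiff : ∀ s : Fin T, s ∈ Finset.univ.erase t ↔ s ≠ t := by
        intro s; simp [Finset.mem_erase]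
      rw [Finset.prod_subtype (Finset.univ.erase t) hiff (fun s => wFam p (e.symm (c, r) s))]
      unfold wRest
      apply Finset.prod_congr rfl
      intro s _
      rw [g2 c r s.1 s.2]
  have L : stepER T p σ t
      = ∑ r, wRest p t r * ∑ X : Fin m, IU r X * p (AR r X) := by
    unfold stepER
    rw [← Equiv.sum_comp e.symm (fun ω => weight p ω * stepReward σ ω t)]
    rw [Fintype.sum_prod_type]
    rw [Finset.sum_comm]
    apply Finset.sum_congr rfl
    intro r _
    have hsr : ∀ c, stepReward σ (e.symm (c, r)) t
        = ∑ X : Fin m, (if c X (AR r X) = true then (1:ℝ) else 0) * IU r X := by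
      intro c
      unfold stepReward
      apply Finset.sum_congr rfl
      intro X _
      simp only [harm c r, g1 c r, hIU]
      by_cases h1 : c X (AR r X) = true <;>
        by_cases h2 : ∀ Y : Fin m, Y ≠ X → AR r Y ≠ AR r X <;>
        simp [h1, h2]
    calc ∑ c, weight p (e.symm (c, r)) * stepReward σ (e.symm (c, r)) t
        = ∑ c, wRest p t r * (wFam p c
            * ∑ X : Fin m, (if c X (AR r X) = true then (1:ℝ) else 0) * IU r X) := by
          apply Finset.sum_congr rfl
          intro c _
          rw [wglue c r, hsr c]
          ring
      _ = wRest p t r * ∑ c, ∑ X : Fin m,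
            (wFam p c * (if c X (AR r X) = true then (1:ℝ) else 0)) * IU r X := by
          rw [Finset.mul_sum]
          apply Finset.sum_congr rfl
          intro c _
          rw [Finset.mul_sum]
          congr 1
          apply Finset.sum_congr rfl
          intro X _
          ring
      _ = wRest p t r * ∑ X : Fin m, IU r X * p (AR r X) := by
          congr 1
          rw [Finset.sum_comm]
          apply Finset.sum_congr rfl
          intro X _
          rw [← Finset.sum_mul, sum_wFam_ind p X (AR r X), mul_comm]
  have R : (∑ ω : Outcome T m K, weight p ω *
      (∑ X : Fin m, p (arm σ ω X t) *
        (if (∀ Y : Fin m, Y ≠ X → arm σ ω Y t ≠ arm σ ω X t) then (1:ℝ) else 0)))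
      = ∑ r, wRest p t r * ∑ X : Fin m, p (AR r X) * IU r X := by
    rw [← Equiv.sum_comp e.symm (fun ω => weight p ω *
      (∑ X : Fin m, p (arm σ ω X t) *
        (if (∀ Y : Fin m, Y ≠ X → arm σ ω Y t ≠ arm σ ω X t) then (1:ℝ) else 0)))]
    rw [Fintype.sum_prod_type]
    rw [Finset.sum_comm]
    apply Finset.sum_congr rfl
    intro r _
    have hin : ∀ c, (∑ X : Fin m, p (arm σ (e.symm (c, r)) X t) *
        (if (∀ Y : Fin m, Y ≠ X → arm σ (e.symm (c, r)) Y t ≠ arm σ (e.symm (c, r)) X t)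
          then (1:ℝ) else 0))
        = ∑ X : Fin m, p (AR r X) * IU r X := by
      intro c
      apply Finset.sum_congr rfl
      intro X _
      simp only [harm c r, hIU]
    calc ∑ c, weight p (e.symm (c, r)) * (∑ X : Fin m, p (arm σ (e.symm (c, r)) X t) *
        (if (∀ Y : Fin m, Y ≠ X → arm σ (e.symm (c, r)) Y t ≠ arm σ (e.symm (c, r)) X t)
          then (1:ℝ) else 0))
        = ∑ c, wFam p c * (wRest p t r * ∑ X : Fin m, p (AR r X) * IU r X) := by
          apply Finset.sum_congr rfl
          intro c _
          rw [wglue c r, hin c]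
          ring
      _ = wRest p t r * ∑ X : Fin m, p (AR r X) * IU r X := by
          rw [← Finset.sum_mul, sum_wFam, one_mul]
  rw [L, R]
  apply Finset.sum_congr rfl
  intro r _
  congr 1
  apply Finset.sum_congr rfl
  intro X _
  ring


lemma pointwise_bound {m K : ℕ} (hm : 1 ≤ m) (hmK : m < K) (p : Fin K → ℝ)
    (h01 : ∀ i, p i ∈ Set.Icc (0:ℝ) 1) (hanti : Antitone p)
    (S₁ S₀ : Finset (Fin K)) (h1 : ∀ a ∈ S₁, p a = 1) (h0 : ∀ a ∈ S₀, p a = 0)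
    (hπ : p ⟨m, hmK⟩ ∈ Set.Icc (0.01 : ℝ) 0.99) (A : Fin m → Fin K) :
    (1/100 : ℝ) * ((∑ a ∈ S₁, (2 * (if ∀ X, A X ≠ a then (1:ℝ) else 0)
        + (∑ X, if A X = a then (1:ℝ) else 0) - 1))
        + ∑ a ∈ S₀, ∑ X, (if A X = a then (1:ℝ) else 0))
      ≤ (∑ i : Fin K, if (i:ℕ) < m then p i else 0)
        - ∑ X, p (A X) * (if (∀ Y, Y ≠ X → A Y ≠ A X) then (1:ℝ) else 0) := by
  classical
  set π := p ⟨m, hmK⟩ with hπdef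
  obtain ⟨hπ1, hπ2⟩ := hπ
  set N : Fin K → ℝ := fun a => ∑ X, if A X = a then (1:ℝ) else 0 with hN
  have hfold : ∀ a, (∑ X, if A X = a then (1:ℝ) else 0) = N a := fun a => rfl
  simp only [hfold]
  have hNnn : ∀ a, 0 ≤ N a := by
    intro a; apply Finset.sum_nonneg; intro X _; positivity
  have hNnat : ∀ a, N a = ((Finset.univ.filter fun X => A X = a).card : ℝ) := by
    intro a
    rw [← hfold a]
    rw [← Finset.sum_filter, Finset.sum_const, nsmul_eq_mul, mul_one]
  -- uniqueness ↔ N (A X) = 1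
  have huniq : ∀ X : Fin m, (∀ Y, Y ≠ X → A Y ≠ A X) ↔ N (A X) = 1 := by
    intro X
    have hsplit : N (A X) = 1 + ∑ Y ∈ Finset.univ.erase X, (if A Y = A X then (1:ℝ) else 0) := by
      rw [← hfold (A X)]
      rw [← Finset.add_sum_erase _ _ (Finset.mem_univ X)]
      simp
    constructor
    · intro h
      rw [hsplit]
      have hz : ∀ Y ∈ Finset.univ.erase X, (if A Y = A X then (1:ℝ) else 0) = 0 := by
        intro Y hY
        rw [Finset.mem_erase] at hY
        simp [h Y hY.1]
      rw [Finset.sum_congr rfl hz]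
      simp
    · intro h Y hYX
      rw [hsplit] at h
      have hz : ∑ Y ∈ Finset.univ.erase X, (if A Y = A X then (1:ℝ) else 0) = 0 := by
        have hnn : ∀ Y ∈ Finset.univ.erase X, 0 ≤ (if A Y = A X then (1:ℝ) else 0) := by
          intro Y _; positivity
        linarith
      have hterm := (Finset.sum_eq_zero_iff_of_nonneg (by intro Y _; positivity)).1 hz Y
        (Finset.mem_erase.2 ⟨hYX, Finset.mem_univ Y⟩)
      intro hEq
      rw [hEq] at hterm
      simp at hterm
  -- none-indicator ↔ N a = 0
  have hnone : ∀ a, (∀ X, A X ≠ a) ↔ N a = 0 := by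
    intro a
    rw [hNnat a, Nat.cast_eq_zero, Finset.card_eq_zero, Finset.filter_eq_empty_iff]
    simp
  -- reward rewrite
  have hreward : (∑ X, p (A X) * (if (∀ Y, Y ≠ X → A Y ≠ A X) then (1:ℝ) else 0))
      = ∑ a : Fin K, p a * (if N a = 1 then 1 else 0) := by
    have hX : ∀ X : Fin m, p (A X) * (if (∀ Y, Y ≠ X → A Y ≠ A X) then (1:ℝ) else 0)
        = ∑ a : Fin K, (if A X = a then (p a * (if N a = 1 then 1 else 0)) else 0) := by
      intro X
      rw [Finset.sum_ite_eq Finset.univ (A X) (fun a => p a * (if N a = 1 then 1 else 0))]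
      simp only [Finset.mem_univ, if_true]
      by_cases h : ∀ Y, Y ≠ X → A Y ≠ A X
      · rw [if_pos h, if_pos ((huniq X).1 h)]
      · rw [if_neg h, if_neg (fun hc => h ((huniq X).2 hc))]
    rw [Finset.sum_congr rfl (fun X _ => hX X), Finset.sum_comm]
    apply Finset.sum_congr rfl
    intro a _
    rw [← Finset.sum_filter, Finset.sum_const, nsmul_eq_mul, ← hNnat a]
    by_cases h : N a = 1
    · rw [h]; ring
    · simp [if_neg h]
  rw [hreward]
  -- sets M, notM
  set M := Finset.univ.filter (fun a : Fin K => (a:ℕ) < m) with hM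
  have hOPT : (∑ i : Fin K, if (i:ℕ) < m then p i else 0) = ∑ a ∈ M, p a := by
    rw [hM, Finset.sum_filter]
  rw [hOPT]
  have hMcard : (∑ a ∈ M, (1:ℝ)) = m := by
    rw [Finset.sum_const, nsmul_eq_mul, mul_one, hM]
    norm_cast
    have hrange : (Finset.range K).filter (fun i => i < m) = Finset.range m := by
      ext i
      simp only [Finset.mem_filter, Finset.mem_range]
      omega
    rw [Finset.card_filter]
    rw [Fin.sum_univ_eq_sum_range (fun i => if i < m then (1:ℕ) else 0) K]
    rw [← Finset.card_filter, hrange, Finset.card_range]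
  have hmem : ∀ a : Fin K, a ∈ M ↔ (a:ℕ) < m := by
    intro a; rw [hM]; simp
  have hπa : ∀ a : Fin K, (a:ℕ) < m → π ≤ p a := by
    intro a ha
    exact hanti (by rw [Fin.le_def]; exact le_of_lt ha)
  have hπb : ∀ a : Fin K, ¬ (a:ℕ) < m → p a ≤ π := by
    intro a ha
    exact hanti (by rw [Fin.le_def]; exact le_of_not_gt ha)
  have hS1M : S₁ ⊆ M := by
    intro a ha
    rw [hmem]
    by_contra h
    have := hπb a h
    rw [h1 a ha] at this
    linarith
  have hS0M : ∀ a ∈ S₀, ¬ (a:ℕ) < m := by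
    intro a ha h
    have := hπa a h
    rw [h0 a ha] at this
    linarith
  set notM := Finset.univ.filter (fun a : Fin K => ¬ (a:ℕ) < m) with hnotM
  have hS0sub : S₀ ⊆ notM := by
    intro a ha
    rw [hnotM, Finset.mem_filter]
    exact ⟨Finset.mem_univ a, hS0M a ha⟩
  -- split the reward sum
  have hsplitR : (∑ a : Fin K, p a * (if N a = 1 then 1 else 0))
      = (∑ a ∈ M, p a * (if N a = 1 then 1 else 0)) + ∑ a ∈ notM, p a * (if N a = 1 then 1 else 0) :=
    (Finset.sum_filter_add_sum_filter_not Finset.univ _ _).symm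
  have hsplitN : (∑ a ∈ M, N a) + (∑ a ∈ notM, N a) = m := by
    rw [Finset.sum_filter_add_sum_filter_not Finset.univ _ N]
    rw [hN, Finset.sum_comm]
    have : ∀ X : Fin m, (∑ a : Fin K, if A X = a then (1:ℝ) else 0) = 1 := by
      intro X
      rw [Finset.sum_ite_eq Finset.univ (A X) (fun _ => (1:ℝ))]
      simp
    rw [Finset.sum_congr rfl (fun X _ => this X), Finset.sum_const, nsmul_eq_mul, mul_one,
      Finset.card_univ, Fintype.card_fin]
  -- step 1 : outside M
  have step1 : (∑ a ∈ notM, p a * (if N a = 1 then 1 else 0)) + π * (∑ a ∈ S₀, N a)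
      ≤ π * ∑ a ∈ notM, N a := by
    have hrw : π * (∑ a ∈ S₀, N a) = ∑ a ∈ notM, (if a ∈ S₀ then π * N a else 0) := by
      rw [Finset.sum_ite_mem, (Finset.inter_eq_right).2 hS0sub, Finset.mul_sum]
    rw [hrw, ← Finset.sum_add_distrib, Finset.mul_sum]
    apply Finset.sum_le_sum
    intro a ha
    rw [hnotM, Finset.mem_filter] at ha
    by_cases h0a : a ∈ S₀
    · rw [h0 a h0a, if_pos h0a, zero_mul, zero_add]
    · rw [if_neg h0a, add_zero]
      by_cases hN1 : N a = 1
      · rw [if_pos hN1, hN1, mul_one, mul_one]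
        exact hπb a ha.2
      · rw [if_neg hN1, mul_zero]
        exact mul_nonneg (by linarith) (hNnn a)
  -- step 2 : per-arm bound on M
  have step2 : ∀ a ∈ M, (if a ∈ S₁ then (1/100) * (2 * (if ∀ X, A X ≠ a then (1:ℝ) else 0) + N a - 1) else 0)
      ≤ p a * (1 - (if N a = 1 then 1 else 0)) + π * (N a - 1) := by
    intro a ha
    rw [hmem] at ha
    have hpa1 : p a ≤ 1 := (h01 a).2
    have hpa0 : 0 ≤ p a := (h01 a).1
    have hpaπ : π ≤ p a := hπa a ha
    have hNa := hNnat a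
    rcases hn : (Finset.univ.filter fun X => A X = a).card with _ | n
    · -- N a = 0
      have hN0 : N a = 0 := by rw [hNa, hn]; norm_num
      have hind : (if ∀ X, A X ≠ a then (1:ℝ) else 0) = 1 := by
        rw [if_pos ((hnone a).2 hN0)]
      have hite : (if (0:ℝ) = 1 then (1:ℝ) else 0) = 0 := by norm_num
      rw [hN0, hind, hite]
      by_cases hS : a ∈ S₁
      · rw [if_pos hS, h1 a hS]
        ring_nf
        nlinarith [hπ2]
      · rw [if_neg hS]
        ring_nf
        nlinarith [hpaπ]
    · rcases n with _ | k
      · -- N a = 1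
        have hN1 : N a = 1 := by rw [hNa, hn]; norm_num
        have hind : (if ∀ X, A X ≠ a then (1:ℝ) else 0) = 0 := by
          rw [if_neg]
          intro hc
          rw [(hnone a).1 hc] at hN1
          norm_num at hN1
        have hite : (if (1:ℝ) = 1 then (1:ℝ) else 0) = 1 := by norm_num
        rw [hN1, hind, hite]
        by_cases hS : a ∈ S₁ <;> simp [hS]
      · -- N a = k + 2
        have hN2 : N a = (k:ℝ) + 2 := by rw [hNa, hn]; push_cast; ring
        have hNne1 : N a ≠ 1 := by rw [hN2]; intro h; have : (0:ℝ) ≤ k := Nat.cast_nonneg k; linarith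
        have hNne0 : N a ≠ 0 := by rw [hN2]; intro h; have : (0:ℝ) ≤ k := Nat.cast_nonneg k; linarith
        have hind : (if ∀ X, A X ≠ a then (1:ℝ) else 0) = 0 := by
          rw [if_neg]; intro hc; exact hNne0 ((hnone a).1 hc)
        have hk : (0:ℝ) ≤ k := Nat.cast_nonneg k
        rw [hind, if_neg hNne1, hN2]
        by_cases hS : a ∈ S₁
        · rw [if_pos hS]
          nlinarith
        · rw [if_neg hS]
          nlinarith
  have step2sum : (1/100 : ℝ) * (∑ a ∈ S₁, (2 * (if ∀ X, A X ≠ a then (1:ℝ) else 0) + N a - 1))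
      ≤ (∑ a ∈ M, p a * (1 - (if N a = 1 then 1 else 0))) + π * ((∑ a ∈ M, N a) - m) := by
    have h1' : (1/100 : ℝ) * (∑ a ∈ S₁, (2 * (if ∀ X, A X ≠ a then (1:ℝ) else 0) + N a - 1))
        = ∑ a ∈ M, (if a ∈ S₁ then (1/100) * (2 * (if ∀ X, A X ≠ a then (1:ℝ) else 0) + N a - 1) else 0) := by
      rw [Finset.sum_ite_mem, (Finset.inter_eq_right).2 hS1M, Finset.mul_sum]
    rw [h1']
    calc ∑ a ∈ M, (if a ∈ S₁ then (1/100) * (2 * (if ∀ X, A X ≠ a then (1:ℝ) else 0) + N a - 1) else 0)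
        ≤ ∑ a ∈ M, (p a * (1 - (if N a = 1 then 1 else 0)) + π * (N a - 1)) :=
          Finset.sum_le_sum step2
      _ = (∑ a ∈ M, p a * (1 - (if N a = 1 then 1 else 0))) + π * ((∑ a ∈ M, N a) - m) := by
          rw [Finset.sum_add_distrib]
          congr 1
          rw [show ((∑ a ∈ M, N a) - (m:ℝ)) = ∑ a ∈ M, (N a - 1) by
            rw [Finset.sum_sub_distrib, hMcard], Finset.mul_sum]
  -- assemble
  have hexp : (∑ a ∈ M, p a * (1 - (if N a = 1 then 1 else 0)))
      = (∑ a ∈ M, p a) - ∑ a ∈ M, p a * (if N a = 1 then 1 else 0) := by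
    rw [← Finset.sum_sub_distrib]
    apply Finset.sum_congr rfl
    intro a _
    ring
  have hs0nn : 0 ≤ ∑ a ∈ S₀, N a := Finset.sum_nonneg (fun a _ => hNnn a)
  have hA3 : (1/100 : ℝ) * (∑ a ∈ S₀, N a) ≤ π * (∑ a ∈ S₀, N a) := by
    apply mul_le_mul_of_nonneg_right _ hs0nn
    linarith
  rw [hsplitR]
  rw [hexp] at step2sum
  have hNM : (∑ a ∈ notM, N a) = m - ∑ a ∈ M, N a := by linarith
  rw [hNM] at step1
  nlinarith [step2sum, step1, hA3]

section Assembly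
variable {T m K : ℕ}

lemma cnt_exp (p : Fin K → ℝ) (σ : DetStrat m K) (t : Fin T) (a : Fin K) :
    ∑ ω : Outcome T m K, weight p ω * (∑ X : Fin m, if arm σ ω X t = a then (1:ℝ) else 0)
      = ∑ X : Fin m, armProb T p σ t X a := by
  simp_rw [Finset.mul_sum]
  rw [Finset.sum_comm]
  rfl

lemma bracket_exp (p : Fin K → ℝ) (σ : DetStrat m K) (t : Fin T) (a : Fin K) :
    ∑ ω : Outcome T m K, weight p ω *
      (2 * (if ∀ X : Fin m, arm σ ω X t ≠ a then (1:ℝ) else 0)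
        + (∑ X : Fin m, if arm σ ω X t = a then (1:ℝ) else 0) - 1)
    = 2 * (∏ X : Fin m, (1 - armProb T p σ t X a)) + (∑ X : Fin m, armProb T p σ t X a) - 1 := by
  have expand : ∀ ω : Outcome T m K, weight p ω *
      (2 * (if ∀ X : Fin m, arm σ ω X t ≠ a then (1:ℝ) else 0)
        + (∑ X : Fin m, if arm σ ω X t = a then (1:ℝ) else 0) - 1)
      = 2 * (weight p ω * (if ∀ X : Fin m, arm σ ω X t ≠ a then (1:ℝ) else 0))
        + weight p ω * (∑ X : Fin m, if arm σ ω X t = a then (1:ℝ) else 0) - weight p ω := by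
    intro ω; ring
  rw [Finset.sum_congr rfl (fun ω _ => expand ω), Finset.sum_sub_distrib,
    Finset.sum_add_distrib, ← Finset.mul_sum, noneProb, cnt_exp, mass]

end Assembly
end FullInfo

/-- the regret lower bound (2.19): on an instance with a set `S₁` of
arms of mean `1`, a set `S₀` of arms of mean `0`, remaining means in `[0.01, 0.99]`, and
`(m+1)`-st largest mean in `[0.01, 0.99]`, the expected regret incurred at any single
time step `t` is at least
`c·(Σ_{a∈S₁}[Π_X(1-q_a^X) + (Π_X(1-q_a^X) + Σ_X q_a^X - 1)] + Σ_{a∈S₀} Σ_X q_a^X)`. -/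
theorem stmt16 :
    ∃ c : ℝ, 0 < c ∧ ∀ T m K : ℕ, 1 ≤ m → ∀ hmK : m < K,
      ∀ p : Fin K → ℝ, FullInfo.IsInstance p →
      ∀ S₁ S₀ : Finset (Fin K), Disjoint S₁ S₀ →
        (∀ a ∈ S₁, p a = 1) → (∀ a ∈ S₀, p a = 0) →
        (∀ a : Fin K, a ∉ S₁ → a ∉ S₀ → p a ∈ Set.Icc (0.01 : ℝ) 0.99) →
        p ⟨m, hmK⟩ ∈ Set.Icc (0.01 : ℝ) 0.99 →
        ∀ σ : FullInfo.DetStrat m K, ∀ t : Fin T,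
          (∑ i : Fin K, if (i : ℕ) < m then p i else 0) - FullInfo.stepER T p σ t ≥
            c * ((∑ a ∈ S₁,
                    ((∏ X : Fin m, (1 - FullInfo.armProb T p σ t X a)) +
                      ((∏ X : Fin m, (1 - FullInfo.armProb T p σ t X a)) +
                        (∑ X : Fin m, FullInfo.armProb T p σ t X a) - 1)))
                + ∑ a ∈ S₀, ∑ X : Fin m, FullInfo.armProb T p σ t X a) := by
  classical
  refine ⟨1/100, by norm_num, ?_⟩
  intro T m K hm hmK p hp S₁ S₀ hdisj h1 h0 hmid hπ σ t
  have hp' : (∀ i, p i ∈ Set.Icc (0:ℝ) 1) ∧ Antitone p := hp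
  obtain ⟨h01, hanti⟩ := hp'
  set OPT : ℝ := ∑ i : Fin K, if (i : ℕ) < m then p i else 0 with hOPT
  -- Φ pointwise
  set Φ : FullInfo.Outcome T m K → ℝ := fun ω =>
    (∑ a ∈ S₁, (2 * (if ∀ X : Fin m, FullInfo.arm σ ω X t ≠ a then (1:ℝ) else 0)
      + (∑ X : Fin m, if FullInfo.arm σ ω X t = a then (1:ℝ) else 0) - 1))
    + ∑ a ∈ S₀, ∑ X : Fin m, (if FullInfo.arm σ ω X t = a then (1:ℝ) else 0) with hΦ
  have hptwise : ∀ ω : FullInfo.Outcome T m K,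
      (1/100 : ℝ) * Φ ω ≤ OPT - ∑ X : Fin m, p (FullInfo.arm σ ω X t) *
        (if (∀ Y : Fin m, Y ≠ X → FullInfo.arm σ ω Y t ≠ FullInfo.arm σ ω X t)
          then (1:ℝ) else 0) := by
    intro ω
    exact FullInfo.pointwise_bound hm hmK p h01 hanti S₁ S₀ h1 h0 hπ (fun X => FullInfo.arm σ ω X t)
  -- expectation of regret
  have hreg : OPT - FullInfo.stepER T p σ t
      = ∑ ω : FullInfo.Outcome T m K, FullInfo.weight p ω *
          (OPT - ∑ X : Fin m, p (FullInfo.arm σ ω X t) *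
            (if (∀ Y : Fin m, Y ≠ X → FullInfo.arm σ ω Y t ≠ FullInfo.arm σ ω X t)
              then (1:ℝ) else 0)) := by
    rw [FullInfo.stepER_eq]
    have : ∀ ω : FullInfo.Outcome T m K, FullInfo.weight p ω *
        (OPT - ∑ X : Fin m, p (FullInfo.arm σ ω X t) *
          (if (∀ Y : Fin m, Y ≠ X → FullInfo.arm σ ω Y t ≠ FullInfo.arm σ ω X t)
            then (1:ℝ) else 0))
        = FullInfo.weight p ω * OPT - FullInfo.weight p ω *
          (∑ X : Fin m, p (FullInfo.arm σ ω X t) *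
            (if (∀ Y : Fin m, Y ≠ X → FullInfo.arm σ ω Y t ≠ FullInfo.arm σ ω X t)
              then (1:ℝ) else 0)) := by
      intro ω; ring
    rw [Finset.sum_congr rfl (fun ω _ => this ω), Finset.sum_sub_distrib,
      ← Finset.sum_mul, FullInfo.mass, one_mul]
  -- expectation of Φ
  have hEΦ : ∑ ω : FullInfo.Outcome T m K, FullInfo.weight p ω * Φ ω
      = (∑ a ∈ S₁,
          ((∏ X : Fin m, (1 - FullInfo.armProb T p σ t X a)) +
            ((∏ X : Fin m, (1 - FullInfo.armProb T p σ t X a)) +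
              (∑ X : Fin m, FullInfo.armProb T p σ t X a) - 1)))
        + ∑ a ∈ S₀, ∑ X : Fin m, FullInfo.armProb T p σ t X a := by
    have expand : ∀ ω : FullInfo.Outcome T m K, FullInfo.weight p ω * Φ ω
        = (∑ a ∈ S₁, FullInfo.weight p ω *
            (2 * (if ∀ X : Fin m, FullInfo.arm σ ω X t ≠ a then (1:ℝ) else 0)
              + (∑ X : Fin m, if FullInfo.arm σ ω X t = a then (1:ℝ) else 0) - 1))
          + ∑ a ∈ S₀, FullInfo.weight p ω *
              (∑ X : Fin m, if FullInfo.arm σ ω X t = a then (1:ℝ) else 0) := by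
      intro ω
      rw [hΦ]
      rw [mul_add, Finset.mul_sum, Finset.mul_sum]
    rw [Finset.sum_congr rfl (fun ω _ => expand ω), Finset.sum_add_distrib]
    congr 1
    · rw [Finset.sum_comm]
      apply Finset.sum_congr rfl
      intro a _
      rw [FullInfo.bracket_exp]
      ring
    · rw [Finset.sum_comm]
      apply Finset.sum_congr rfl
      intro a _
      exact FullInfo.cnt_exp p σ t a
  rw [ge_iff_le, hreg, ← hEΦ]
  have step : ∑ ω : FullInfo.Outcome T m K, FullInfo.weight p ω * ((1/100 : ℝ) * Φ ω)
      ≤ ∑ ω : FullInfo.Outcome T m K, FullInfo.weight p ω *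
          (OPT - ∑ X : Fin m, p (FullInfo.arm σ ω X t) *
            (if (∀ Y : Fin m, Y ≠ X → FullInfo.arm σ ω Y t ≠ FullInfo.arm σ ω X t)
              then (1:ℝ) else 0)) := by
    apply Finset.sum_le_sum
    intro ω _
    exact mul_le_mul_of_nonneg_left (hptwise ω) (FullInfo.weight_nonneg h01 ω)
  refine le_trans (le_of_eq ?_) step
  rw [Finset.mul_sum]
  apply Finset.sum_congr rfl
  intro ω _
  ring
end
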